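/- arXiv:2209.14622 — 3 statements merged into one kernel-verified Lean document; each statement's English description precedes it below -/
import Mathlib

section
/- Let φ : [0,∞) × ℝ^d → ℝ be the unique viscosity solution of the Hamilton–Jacobi equation ∂_t φ + |∇φ|²/2 = 0 with globally Lipschitz initial datum φ(0,·), equivalently given by the Hopf–Lax formula φ(t,x) = inf_y |x−y|²/(2t) + φ(0,y) for t > 0. Set u := φ(0,·) + |·|²/2, let μ₀ ∈ 𝓟₂(ℝ^d) be absolutely continuous, and define ω(t) = [∇ co((1−t)|·|²/2 + t u)]_# μ₀, where co denotes the convex hull. Then for all t ≥ 0, ω(t) is a minimizer of the problem min over μ ∈ 𝓟₂(ℝ^d) of W₂²(μ₀, μ)/(2t) − ∫ φ(t,·) dμ. -/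
open MeasureTheory Set
open scoped ENNReal RealInnerProductSpace

noncomputable section

abbrev Rd (d : ℕ) : Type := EuclideanSpace ℝ (Fin d)

/-- A coupling between two measures on `Rd d`. -/
def IsCoupling {d : ℕ} (γ : Measure (Rd d × Rd d)) (μ ν : Measure (Rd d)) : Prop :=
  γ.map Prod.fst = μ ∧ γ.map Prod.snd = ν

/-- Quadratic transport cost of a plan. -/
def transportCost {d : ℕ} (γ : Measure (Rd d × Rd d)) : ℝ≥0∞ :=
  ∫⁻ p, ENNReal.ofReal (‖p.1 - p.2‖ ^ 2) ∂γ

/-- Squared 2-Wasserstein distance (extended-real valued). -/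
def W2sqE {d : ℕ} (μ ν : Measure (Rd d)) : ℝ≥0∞ :=
  ⨅ (γ : Measure (Rd d × Rd d)) (_ : IsCoupling γ μ ν), transportCost γ

/-- Squared 2-Wasserstein distance. -/
def W2sq {d : ℕ} (μ ν : Measure (Rd d)) : ℝ := (W2sqE μ ν).toReal

/-- 2-Wasserstein distance. -/
def W2 {d : ℕ} (μ ν : Measure (Rd d)) : ℝ := Real.sqrt (W2sq μ ν)

/-- Optimal transport plan. -/
def IsOptimalPlan {d : ℕ} (γ : Measure (Rd d × Rd d)) (μ ν : Measure (Rd d)) : Prop :=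
  IsCoupling γ μ ν ∧ transportCost γ = W2sqE μ ν

/-- Probability measures with finite second moment: `𝓟₂(ℝ^d)`. -/
def MemP2 {d : ℕ} (μ : Measure (Rd d)) : Prop :=
  IsProbabilityMeasure μ ∧ (∫⁻ x, ENNReal.ofReal (‖x‖ ^ 2) ∂μ) < ⊤

/-- Probability measures supported on `Ω`: `𝓟(Ω)`. -/
def ProbOn {d : ℕ} (Ω : Set (Rd d)) (μ : Measure (Rd d)) : Prop :=
  IsProbabilityMeasure μ ∧ μ Ωᶜ = 0

/-- θ-dissipative extrapolation operator. -/
def Dissipative {d : ℕ} (θ : ℝ)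
    (E : Measure (Rd d) → Measure (Rd d) → Measure (Rd d)) : Prop :=
  ∀ μ₀ μ₁ : Measure (Rd d), MemP2 μ₀ → MemP2 μ₁ → W2 μ₁ (E μ₀ μ₁) ≤ θ * W2 μ₀ μ₁

/-- Sup norm of the Hessian of a test function. -/
def HessNorm {d : ℕ} (φ : Rd d → ℝ) : ℝ := ⨆ x, ‖iteratedFDeriv ℝ 2 φ x‖

/-- No-flux boundary condition `∇φ · n_∂Ω = 0` on `∂Ω`, expressed via the
normal cone of the convex set `Ω`. -/
def NormalBC {d : ℕ} (Ω : Set (Rd d)) (φ : Rd d → ℝ) : Prop :=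
  ∀ x ∈ frontier Ω, ∀ v : Rd d, (∀ y ∈ Ω, ⟪v, y - x⟫ ≤ 0) → ⟪gradient φ x, v⟫ = 0

/-- Laplacian as the trace of the second derivative. -/
def lap {d : ℕ} (φ : Rd d → ℝ) (x : Rd d) : ℝ :=
  ∑ i : Fin d, iteratedFDeriv ℝ 2 φ x ![EuclideanSpace.single i 1, EuclideanSpace.single i 1]

/-- Absolutely continuous curve in the Wasserstein space on `[0,T]`. -/
def ACCurve {d : ℕ} (T : ℝ) (ϱ : ℝ → Measure (Rd d)) : Prop :=
  ∃ m : ℝ → ℝ, IntegrableOn m (Icc 0 T) ∧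
    ∀ r s : ℝ, 0 ≤ r → r ≤ s → s ≤ T → W2 (ϱ r) (ϱ s) ≤ ∫ t in r..s, m t

/-- Convex envelope (convex hull) of a function: the pointwise supremum of all convex
minorants. -/
def convEnv {d : ℕ} (f : Rd d → ℝ) : Rd d → ℝ :=
  fun x => sSup {r : ℝ | ∃ g : Rd d → ℝ, ConvexOn ℝ univ g ∧ (∀ z, g z ≤ f z) ∧ r = g x}

namespace Stmt7

variable {d : ℕ} {t : ℝ} {φ0 : Rd d → ℝ} {K : NNReal} {φt : Rd d → ℝ}

lemma bddAbove_convEnvSet (f : Rd d → ℝ) (x : Rd d) :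
    BddAbove {r : ℝ | ∃ g : Rd d → ℝ, ConvexOn ℝ univ g ∧ (∀ z, g z ≤ f z) ∧ r = g x} := by
  refine ⟨f x, ?_⟩
  rintro r ⟨g, _, hgf, rfl⟩
  exact hgf x

lemma le_convEnv {f g : Rd d → ℝ} (hg : ConvexOn ℝ univ g) (hgf : ∀ z, g z ≤ f z) (x : Rd d) :
    g x ≤ convEnv f x :=
  le_csSup (bddAbove_convEnvSet f x) ⟨g, hg, hgf, rfl⟩

lemma convEnv_le_self {f : Rd d → ℝ} (c : ℝ) (hc : ∀ z, c ≤ f z) (x : Rd d) :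
    convEnv f x ≤ f x := by
  refine csSup_le ⟨c, ⟨fun _ => c, convexOn_const c convex_univ, hc, rfl⟩⟩ ?_
  rintro r ⟨g, _, hgf, rfl⟩
  exact hgf x

lemma convexOn_convEnv {f : Rd d → ℝ} (c : ℝ) (hc : ∀ z, c ≤ f z) :
    ConvexOn ℝ univ (convEnv f) := by
  refine ⟨convex_univ, fun x _ y _ a b ha hb hab => ?_⟩
  refine csSup_le ⟨c, ⟨fun _ => c, convexOn_const c convex_univ, hc, rfl⟩⟩ ?_
  rintro r ⟨g, hg, hgf, rfl⟩
  calc g (a • x + b • y) ≤ a * g x + b * g y := hg.2 (mem_univ x) (mem_univ y) ha hb hab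
    _ ≤ a * convEnv f x + b * convEnv f y := by
        have h1 := le_convEnv hg hgf x
        have h2 := le_convEnv hg hgf y
        have := mul_le_mul_of_nonneg_left h1 ha
        have := mul_le_mul_of_nonneg_left h2 hb
        linarith

/-- Subgradient inequality for a convex function at a differentiability point. -/
lemma convex_subgrad {v : Rd d → ℝ} (hv : ConvexOn ℝ univ v) {x : Rd d}
    (hd : DifferentiableAt ℝ v x) (z : Rd d) :
    v x + ⟪gradient v x, z - x⟫ ≤ v z := by
  set w := z - x with hw
  have hline : HasDerivAt (fun a : ℝ => x + a • w) w 0 := by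
    simpa using ((hasDerivAt_id (0 : ℝ)).smul_const w).const_add x
  have hψ : HasDerivAt (fun a : ℝ => v (x + a • w)) (fderiv ℝ v x w) 0 := by
    have hfd : HasFDerivAt v (fderiv ℝ v x) (x + (0:ℝ) • w) := by
      simpa using hd.hasFDerivAt
    exact hfd.comp_hasDerivAt 0 hline
  have hgrad : fderiv ℝ v x w = ⟪gradient v x, w⟫ := by
    rw [gradient]
    rw [InnerProductSpace.toDual_symm_apply]
  have hslope : Filter.Tendsto (slope (fun a : ℝ => v (x + a • w)) 0) (nhdsWithin 0 {(0:ℝ)}ᶜ)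
      (nhds (fderiv ℝ v x w)) := hasDerivAt_iff_tendsto_slope.1 hψ
  have hslope' : Filter.Tendsto (slope (fun a : ℝ => v (x + a • w)) 0) (nhdsWithin 0 (Ioi 0))
      (nhds (fderiv ℝ v x w)) :=
    hslope.mono_left (nhdsWithin_mono 0 (fun a ha => ne_of_gt ha))
  have key : ∀ᶠ a in nhdsWithin (0:ℝ) (Ioi 0), slope (fun a : ℝ => v (x + a • w)) 0 a ≤ v z - v x := by
    filter_upwards [Ioc_mem_nhdsGT_of_mem (Set.mem_Ico.2 ⟨le_refl (0:ℝ), zero_lt_one⟩)] with a ha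
    have ha0 : 0 < a := ha.1
    have hcvx := hv.2 (mem_univ x) (mem_univ z) (by linarith [ha.2] : (0:ℝ) ≤ 1 - a) ha0.le (by ring)
    have hpt : (1 - a) • x + a • z = x + a • w := by rw [hw]; module
    rw [hpt] at hcvx
    simp only [smul_eq_mul] at hcvx
    have hcvx' : v (x + a • w) - v x ≤ a * (v z - v x) := by linarith
    rw [slope_def_field]
    simp only [sub_zero]
    rw [div_le_iff₀ ha0]
    have h0 : v (x + (0:ℝ) • w) = v x := by simp
    rw [h0]
    nlinarith [hcvx']
  have hfin : fderiv ℝ v x w ≤ v z - v x := le_of_tendsto hslope' key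
  rw [hgrad] at hfin
  linarith


lemma ae_diff_of_convex {v : Rd d → ℝ} (hv : ConvexOn ℝ univ v) :
    ∀ᵐ x ∂(volume : Measure (Rd d)), DifferentiableAt ℝ v x := by
  have hc : Continuous v := hv.locallyLipschitz.continuous
  have H : ∀ n : ℕ, ∀ᵐ x ∂(volume : Measure (Rd d)),
      x ∈ Metric.ball (0 : Rd d) (n + 1) → DifferentiableAt ℝ v x := by
    intro n
    have hcb : ConvexOn ℝ (Metric.ball (0 : Rd d) (n + 2)) v :=
      hv.subset (subset_univ _) (convex_ball _ _)
    have hbd : Bornology.IsBounded (v '' Metric.ball (0 : Rd d) (n + 2)) := by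
      refine (((isCompact_closedBall (0 : Rd d) (n + 2)).image hc).isBounded).subset ?_
      exact image_mono Metric.ball_subset_closedBall
    obtain ⟨L, hL⟩ := hcb.exists_lipschitzOnWith_of_isBounded
      (by linarith : (n : ℝ) + 1 < n + 2) hbd
    have := hL.ae_differentiableWithinAt_of_mem (μ := (volume : Measure (Rd d)))
    filter_upwards [this] with x hx hmem
    exact (hx hmem).differentiableAt ((Metric.isOpen_ball).mem_nhds hmem)
  filter_upwards [ae_all_iff.2 H] with x hx
  have hmem : x ∈ Metric.ball (0 : Rd d) ((⌊‖x‖⌋₊ : ℝ) + 1) := by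
    rw [Metric.mem_ball, dist_zero_right]
    exact Nat.lt_floor_add_one _
  exact hx ⌊‖x‖⌋₊ hmem

lemma measurable_gradient (v : Rd d → ℝ) : Measurable (gradient v) := by
  have : gradient v = fun x => (InnerProductSpace.toDual ℝ (Rd d)).symm (fderiv ℝ v x) := rfl
  rw [this]
  exact ((InnerProductSpace.toDual ℝ (Rd d)).symm.continuous.measurable).comp
    (measurable_fderiv ℝ v)


lemma phi0_bound (hlip : LipschitzWith K φ0) (z : Rd d) : |φ0 z - φ0 0| ≤ K * ‖z‖ := by
  have := hlip.dist_le_mul z 0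
  rwa [Real.dist_eq, dist_zero_right] at this

lemma HL_lb (ht : 0 < t) (hlip : LipschitzWith K φ0) (y z : Rd d) :
    φ0 0 - K * ‖y‖ - K ^ 2 * t / 2 ≤ ‖y - z‖ ^ 2 / (2 * t) + φ0 z := by
  have h0 := abs_le.1 (phi0_bound hlip z)
  have hz : ‖z‖ ≤ ‖y - z‖ + ‖y‖ := by
    have := norm_sub_le (y - z) y
    simpa [sub_sub_cancel_left, norm_neg] using this
  have hsq : (0:ℝ) ≤ (‖y - z‖ - K * t) ^ 2 := sq_nonneg _
  have hdiv : K * ‖y - z‖ - K ^ 2 * t / 2 ≤ ‖y - z‖ ^ 2 / (2 * t) := by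
    rw [le_div_iff₀ (by linarith : (0:ℝ) < 2 * t)]
    nlinarith
  have hK : (0:ℝ) ≤ K := K.coe_nonneg
  nlinarith [h0.1, mul_le_mul_of_nonneg_left hz hK]

lemma HL_bdd (ht : 0 < t) (hlip : LipschitzWith K φ0) (y : Rd d) :
    BddBelow (Set.range fun z : Rd d => ‖y - z‖ ^ 2 / (2 * t) + φ0 z) := by
  refine ⟨φ0 0 - K * ‖y‖ - K ^ 2 * t / 2, ?_⟩
  rintro r ⟨z, rfl⟩
  exact HL_lb ht hlip y z

lemma phi_le (ht : 0 < t) (hlip : LipschitzWith K φ0)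
    (hHL : ∀ y : Rd d, φt y = ⨅ z : Rd d, (‖y - z‖ ^ 2 / (2 * t) + φ0 z))
    (y x : Rd d) : φt y ≤ ‖y - x‖ ^ 2 / (2 * t) + φ0 x := by
  rw [hHL y]; exact ciInf_le (HL_bdd ht hlip y) x

lemma le_phi (ht : 0 < t) (hlip : LipschitzWith K φ0)
    (hHL : ∀ y : Rd d, φt y = ⨅ z : Rd d, (‖y - z‖ ^ 2 / (2 * t) + φ0 z))
    {y : Rd d} {b : ℝ} (h : ∀ z : Rd d, b ≤ ‖y - z‖ ^ 2 / (2 * t) + φ0 z) : b ≤ φt y := by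
  rw [hHL y]; exact le_ciInf h

lemma phi_lip (ht : 0 < t) (hlip : LipschitzWith K φ0)
    (hHL : ∀ y : Rd d, φt y = ⨅ z : Rd d, (‖y - z‖ ^ 2 / (2 * t) + φ0 z)) :
    LipschitzWith K φt := by
  have key : ∀ y y' : Rd d, φt y ≤ φt y' + K * ‖y - y'‖ := by
    intro y y'
    have h1 : ∀ z : Rd d, φt y ≤ ‖y' - z‖ ^ 2 / (2 * t) + φ0 z + K * ‖y - y'‖ := by
      intro z
      have h2 := phi_le ht hlip hHL y (z + (y - y'))
      have h3 : ‖y - (z + (y - y'))‖ = ‖y' - z‖ := by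
        have : y - (z + (y - y')) = y' - z := by abel
        rw [this]
      rw [h3] at h2
      have h4 : φ0 (z + (y - y')) ≤ φ0 z + K * ‖y - y'‖ := by
        have := hlip.dist_le_mul (z + (y - y')) z
        rw [Real.dist_eq, dist_eq_norm] at this
        have h5 : z + (y - y') - z = y - y' := by abel
        rw [h5] at this
        have := abs_le.1 this
        linarith [this.1]
      linarith
    have := le_phi (φt := φt) ht hlip hHL (y := y') (b := φt y - K * ‖y - y'‖) ?_
    · linarith
    · intro z; linarith [h1 z]
  refine LipschitzWith.of_dist_le_mul fun a b => ?_
  rw [Real.dist_eq, abs_sub_le_iff, dist_eq_norm]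
  constructor
  · linarith [key a b]
  · have := key b a
    rw [norm_sub_rev] at this
    linarith


/-- The function whose convex envelope gives the transport map. -/
def Fe {d : ℕ} (t : ℝ) (φ0 : Rd d → ℝ) : Rd d → ℝ := fun x => ‖x‖ ^ 2 / 2 + t * φ0 x

def Ve {d : ℕ} (t : ℝ) (φ0 : Rd d → ℝ) : Rd d → ℝ := convEnv (Fe t φ0)

lemma c0_le_Fe (ht : 0 < t) (hlip : LipschitzWith K φ0) (x : Rd d) :
    t * φ0 0 - t ^ 2 * K ^ 2 / 2 ≤ Fe t φ0 x := by
  have h := abs_le.1 (phi0_bound hlip x)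
  have hsq : (0:ℝ) ≤ (‖x‖ - t * K) ^ 2 := sq_nonneg _
  have hK : (0:ℝ) ≤ K := K.coe_nonneg
  have := mul_le_mul_of_nonneg_left h.1 ht.le
  simp only [Fe]
  nlinarith

lemma Ve_le_Fe (ht : 0 < t) (hlip : LipschitzWith K φ0) (x : Rd d) :
    Ve t φ0 x ≤ Fe t φ0 x :=
  convEnv_le_self _ (c0_le_Fe ht hlip) x

lemma c0_le_Ve (ht : 0 < t) (hlip : LipschitzWith K φ0) (x : Rd d) :
    t * φ0 0 - t ^ 2 * K ^ 2 / 2 ≤ Ve t φ0 x :=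
  le_convEnv (convexOn_const _ convex_univ) (c0_le_Fe ht hlip) x

lemma convexOn_Ve (ht : 0 < t) (hlip : LipschitzWith K φ0) :
    ConvexOn ℝ univ (Ve t φ0) :=
  convexOn_convEnv _ (c0_le_Fe ht hlip)

/-- The affine minorant built from the Hopf–Lax solution. -/
lemma aff_le_Ve (ht : 0 < t) (hlip : LipschitzWith K φ0)
    (hHL : ∀ y : Rd d, φt y = ⨅ z : Rd d, (‖y - z‖ ^ 2 / (2 * t) + φ0 z))
    (y x : Rd d) : ⟪x, y⟫ - ‖y‖ ^ 2 / 2 + t * φt y ≤ Ve t φ0 x := by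
  unfold Ve
  refine le_convEnv (g := fun x => ⟪x, y⟫ - ‖y‖ ^ 2 / 2 + t * φt y) ?_ ?_ x
  · refine ⟨convex_univ, fun p _ q _ a b ha hb hab => le_of_eq ?_⟩
    simp only [inner_add_left, real_inner_smul_left, smul_eq_mul]
    linear_combination (‖y‖ ^ 2 / 2 - t * φt y) * hab
  · intro z
    have h1 := phi_le ht hlip hHL y z
    have h2 := mul_le_mul_of_nonneg_left h1 ht.le
    have e : t * (‖y - z‖ ^ 2 / (2 * t) + φ0 z) = ‖y - z‖ ^ 2 / 2 + t * φ0 z := by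
      field_simp
    rw [e] at h2
    have e2 : ‖y - z‖ ^ 2 = ‖y‖ ^ 2 - 2 * ⟪y, z⟫ + ‖z‖ ^ 2 := norm_sub_sq_real y z
    have e3 : ⟪z, y⟫ = ⟪y, z⟫ := real_inner_comm y z
    simp only [Fe]
    linarith

lemma grad_Ve_bound (ht : 0 < t) (hlip : LipschitzWith K φ0) (x : Rd d) :
    ‖gradient (Ve t φ0) x‖ ≤ 2 * ‖x‖ + (2 + 2 * t * K + t ^ 2 * K ^ 2 / 2) := by
  have hK : (0:ℝ) ≤ K := K.coe_nonneg
  by_cases hd : DifferentiableAt ℝ (Ve t φ0) x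
  · set p := gradient (Ve t φ0) x with hp
    rcases eq_or_ne p 0 with h0 | h0
    · rw [h0, norm_zero]; positivity
    · set s : ℝ := ‖x‖ + 1 with hs
      set u : Rd d := ‖p‖⁻¹ • p with hu
      have hun : ‖u‖ = 1 := by rw [hu]; exact norm_smul_inv_norm h0
      set z : Rd d := x + s • u with hz
      have hsub := convex_subgrad (convexOn_Ve ht hlip) hd z
      rw [← hp] at hsub
      have hpn : ‖p‖ ≠ 0 := norm_ne_zero_iff.2 h0
      clear_value s u z
      have hs1 : (1:ℝ) ≤ s := by rw [hs]; linarith [norm_nonneg x]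
      have hinner : ⟪p, z - x⟫ = s * ‖p‖ := by
        have : z - x = s • u := by rw [hz]; abel
        rw [this, real_inner_smul_right, hu, real_inner_smul_right,
          real_inner_self_eq_norm_sq]
        field_simp
      have hznorm : ‖z‖ ≤ ‖x‖ + s := by
        calc ‖z‖ = ‖x + s • u‖ := by rw [hz]
          _ ≤ ‖x‖ + ‖s • u‖ := norm_add_le _ _
          _ = ‖x‖ + s := by
              rw [norm_smul, hun, Real.norm_eq_abs, abs_of_pos (by linarith : (0:ℝ) < s)]; ring
      have hFez : Fe t φ0 z ≤ (‖x‖ + s) ^ 2 / 2 + t * φ0 0 + t * K * (‖x‖ + s) := by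
        have h1 := abs_le.1 (phi0_bound hlip z)
        have h2 : φ0 z ≤ φ0 0 + K * ‖z‖ := by linarith [h1.2]
        have h3 : (K:ℝ) * ‖z‖ ≤ K * (‖x‖ + s) := mul_le_mul_of_nonneg_left hznorm hK
        have h4 : ‖z‖ ^ 2 ≤ (‖x‖ + s) ^ 2 := pow_le_pow_left₀ (norm_nonneg z) hznorm 2
        have h5 := mul_le_mul_of_nonneg_left h2 ht.le
        have h6 := mul_le_mul_of_nonneg_left h3 ht.le
        simp only [Fe]
        linarith [h4, h5, h6, mul_le_mul_of_nonneg_left (mul_le_mul_of_nonneg_left hznorm hK) ht.le]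
      have hVez : Ve t φ0 z ≤ Fe t φ0 z := Ve_le_Fe ht hlip z
      have hVex : t * φ0 0 - t ^ 2 * K ^ 2 / 2 ≤ Ve t φ0 x := c0_le_Ve ht hlip x
      rw [hinner] at hsub
      -- s * ‖p‖ ≤ Fe z - c0 ≤ (2s-1)^2/2 + tK(2s-1) + t^2K^2/2 with ‖x‖ = s - 1
      have hxs : ‖x‖ = s - 1 := by rw [hs]; ring
      rw [hxs] at hFez
      have hkey : s * ‖p‖ ≤ (2 * s - 1) ^ 2 / 2 + t * K * (2 * s - 1) + t ^ 2 * K ^ 2 / 2 := by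
        have : (s - 1 + s) = 2 * s - 1 := by ring
        rw [this] at hFez
        linarith
      have hgoal : s * ‖p‖ ≤ s * (2 * (s - 1) + (2 + 2 * t * K + t ^ 2 * K ^ 2 / 2)) := by
        have htK : (0:ℝ) ≤ t * K := by positivity
        nlinarith [sq_nonneg (t * K)]
      have := le_of_mul_le_mul_left (by linarith [hgoal] : s * ‖p‖ ≤ s * (2 * (s - 1) + (2 + 2 * t * K + t ^ 2 * K ^ 2 / 2))) (by linarith : (0:ℝ) < s)
      rw [hxs]
      linarith
  · have : gradient (Ve t φ0) x = 0 := by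
      unfold gradient
      rw [fderiv_zero_of_not_differentiableAt hd]
      simp
    rw [this, norm_zero]
    positivity

/-- Pointwise inequality A : lower bound for arbitrary couplings. -/
lemma keyA (ht : 0 < t) (hlip : LipschitzWith K φ0)
    (hHL : ∀ y : Rd d, φt y = ⨅ z : Rd d, (‖y - z‖ ^ 2 / (2 * t) + φ0 z))
    (x y : Rd d) : ‖x‖ ^ 2 / 2 - Ve t φ0 x + t * φt y ≤ ‖x - y‖ ^ 2 / 2 := by
  have h1 := aff_le_Ve ht hlip hHL y x
  have e : ‖x - y‖ ^ 2 = ‖x‖ ^ 2 - 2 * ⟪x, y⟫ + ‖y‖ ^ 2 := norm_sub_sq_real x y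
  linarith

/-- Pointwise inequality B : upper bound along the transport map. -/
lemma keyB (ht : 0 < t) (hlip : LipschitzWith K φ0)
    (hHL : ∀ y : Rd d, φt y = ⨅ z : Rd d, (‖y - z‖ ^ 2 / (2 * t) + φ0 z))
    {x : Rd d} (hd : DifferentiableAt ℝ (Ve t φ0) x) :
    ‖x - gradient (Ve t φ0) x‖ ^ 2 / 2
      ≤ ‖x‖ ^ 2 / 2 - Ve t φ0 x + t * φt (gradient (Ve t φ0) x) := by
  set p := gradient (Ve t φ0) x with hp
  have h1 : ∀ z : Rd d, ‖p‖ ^ 2 / 2 - ⟪p, x⟫ + Ve t φ0 x ≤ ‖p - z‖ ^ 2 / 2 + t * φ0 z := by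
    intro z
    have hsub := convex_subgrad (convexOn_Ve ht hlip) hd z
    rw [← hp] at hsub
    have hVez : Ve t φ0 z ≤ Fe t φ0 z := Ve_le_Fe ht hlip z
    have e1 : ‖p - z‖ ^ 2 = ‖p‖ ^ 2 - 2 * ⟪p, z⟫ + ‖z‖ ^ 2 := norm_sub_sq_real p z
    have e2 : ⟪p, z - x⟫ = ⟪p, z⟫ - ⟪p, x⟫ := inner_sub_right p z x
    simp only [Fe] at hVez
    linarith
  have h2 : ‖p‖ ^ 2 / 2 - ⟪p, x⟫ + Ve t φ0 x ≤ t * φt p := by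
    have hb : (‖p‖ ^ 2 / 2 - ⟪p, x⟫ + Ve t φ0 x) / t ≤ φt p := by
      refine le_phi ht hlip hHL fun z => ?_
      rw [div_le_iff₀ ht]  -- maybe needs different form
      have := h1 z
      have e : (‖p - z‖ ^ 2 / (2 * t) + φ0 z) * t = ‖p - z‖ ^ 2 / 2 + t * φ0 z := by
        field_simp
      rw [e]
      linarith
    have := mul_le_mul_of_nonneg_left hb ht.le
    rw [mul_div_cancel₀ _ (ne_of_gt ht)] at this
    linarith [this]
  have e3 : ‖x - p‖ ^ 2 = ‖x‖ ^ 2 - 2 * ⟪x, p⟫ + ‖p‖ ^ 2 := norm_sub_sq_real x p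
  have e4 : ⟪x, p⟫ = ⟪p, x⟫ := real_inner_comm p x
  linarith


lemma memP2_integrable_sq {μ : Measure (Rd d)} (h : MemP2 μ) :
    Integrable (fun x : Rd d => ‖x‖ ^ 2) μ := by
  refine ⟨((continuous_norm).pow 2).aestronglyMeasurable, ?_⟩
  rw [hasFiniteIntegral_iff_ofReal (Filter.Eventually.of_forall fun x => by positivity)]
  exact h.2

lemma memP2_integrable_norm {μ : Measure (Rd d)} (h : MemP2 μ) :
    Integrable (fun x : Rd d => ‖x‖) μ := by
  haveI := h.1
  refine Integrable.mono' ((integrable_const (1:ℝ)).add (memP2_integrable_sq h))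
    (continuous_norm).aestronglyMeasurable (Filter.Eventually.of_forall fun x => ?_)
  have hx : (0:ℝ) ≤ ‖x‖ := norm_nonneg x
  rw [Real.norm_eq_abs, abs_of_nonneg hx]
  show ‖x‖ ≤ 1 + ‖x‖ ^ 2
  nlinarith [sq_nonneg (‖x‖ - 1)]

lemma memP2_integrable_lipschitz {g : Rd d → ℝ} {L : NNReal} (hg : LipschitzWith L g)
    {μ : Measure (Rd d)} (h : MemP2 μ) : Integrable g μ := by
  haveI := h.1
  refine Integrable.mono' ((integrable_const (|g 0|)).add
    ((memP2_integrable_norm h).const_mul L))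
    hg.continuous.aestronglyMeasurable (Filter.Eventually.of_forall fun x => ?_)
  have h1 := hg.dist_le_mul x 0
  rw [Real.dist_eq, dist_zero_right] at h1
  rw [Real.norm_eq_abs]
  show |g x| ≤ |g 0| + ↑L * ‖x‖
  have h2 : |g x| ≤ |g 0| + |g x - g 0| := by
    have := abs_add_le (g 0) (g x - g 0)
    simpa using this
  linarith

lemma lintegral_ofReal_sq_fst {γ : Measure (Rd d × Rd d)} {μ : Measure (Rd d)}
    (hm : γ.map Prod.fst = μ) :
    ∫⁻ p : Rd d × Rd d, ENNReal.ofReal (‖p.1‖ ^ 2) ∂γ = ∫⁻ x, ENNReal.ofReal (‖x‖ ^ 2) ∂μ := by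
  rw [← hm, lintegral_map (by fun_prop) measurable_fst]

lemma lintegral_ofReal_sq_snd {γ : Measure (Rd d × Rd d)} {μ : Measure (Rd d)}
    (hm : γ.map Prod.snd = μ) :
    ∫⁻ p : Rd d × Rd d, ENNReal.ofReal (‖p.2‖ ^ 2) ∂γ = ∫⁻ x, ENNReal.ofReal (‖x‖ ^ 2) ∂μ := by
  rw [← hm, lintegral_map (by fun_prop) measurable_snd]

lemma W2sqE_ne_top {μ ν : Measure (Rd d)} (hμ : MemP2 μ) (hν : MemP2 ν) :
    W2sqE μ ν ≠ ⊤ := by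
  haveI := hμ.1; haveI := hν.1
  have hcoup : IsCoupling (μ.prod ν) μ ν := by
    constructor
    · rw [Measure.map_fst_prod]; simp
    · rw [Measure.map_snd_prod]; simp
  have hle : W2sqE μ ν ≤ transportCost (μ.prod ν) := by
    unfold W2sqE; exact iInf₂_le (μ.prod ν) hcoup
  refine ne_top_of_le_ne_top ?_ hle
  have hfst : (μ.prod ν).map Prod.fst = μ := by rw [Measure.map_fst_prod]; simp
  have hsnd : (μ.prod ν).map Prod.snd = ν := by rw [Measure.map_snd_prod]; simp
  have hbound : transportCost (μ.prod ν)
      ≤ ∫⁻ p : Rd d × Rd d, (ENNReal.ofReal (2 * ‖p.1‖ ^ 2) + ENNReal.ofReal (2 * ‖p.2‖ ^ 2))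
        ∂(μ.prod ν) := by
    refine lintegral_mono fun p => ?_
    rw [← ENNReal.ofReal_add (by positivity) (by positivity)]
    refine ENNReal.ofReal_le_ofReal ?_
    have h1 := norm_sub_le p.1 p.2
    have h2 : ‖p.1 - p.2‖ ^ 2 ≤ (‖p.1‖ + ‖p.2‖) ^ 2 := by
      apply pow_le_pow_left₀ (norm_nonneg _) h1
    nlinarith [sq_nonneg (‖p.1‖ - ‖p.2‖)]
  have hsplit : ∫⁻ p : Rd d × Rd d, (ENNReal.ofReal (2 * ‖p.1‖ ^ 2) + ENNReal.ofReal (2 * ‖p.2‖ ^ 2))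
        ∂(μ.prod ν) ≠ ⊤ := by
    rw [lintegral_add_left (by fun_prop)]
    have h1 : ∫⁻ p : Rd d × Rd d, ENNReal.ofReal (2 * ‖p.1‖ ^ 2) ∂(μ.prod ν) ≠ ⊤ := by
      have : ∀ p : Rd d × Rd d, ENNReal.ofReal (2 * ‖p.1‖ ^ 2) = 2 * ENNReal.ofReal (‖p.1‖ ^ 2) := by
        intro p; rw [ENNReal.ofReal_mul (by norm_num)]; norm_num
      simp_rw [this]
      rw [lintegral_const_mul 2 (by fun_prop)]
      rw [lintegral_ofReal_sq_fst hfst]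
      exact ENNReal.mul_ne_top (by norm_num) hμ.2.ne
    have h2 : ∫⁻ p : Rd d × Rd d, ENNReal.ofReal (2 * ‖p.2‖ ^ 2) ∂(μ.prod ν) ≠ ⊤ := by
      have : ∀ p : Rd d × Rd d, ENNReal.ofReal (2 * ‖p.2‖ ^ 2) = 2 * ENNReal.ofReal (‖p.2‖ ^ 2) := by
        intro p; rw [ENNReal.ofReal_mul (by norm_num)]; norm_num
      simp_rw [this]
      rw [lintegral_const_mul 2 (by fun_prop)]
      rw [lintegral_ofReal_sq_snd hsnd]
      exact ENNReal.mul_ne_top (by norm_num) hν.2.ne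
    exact ENNReal.add_ne_top.2 ⟨h1, h2⟩
  exact ne_top_of_le_ne_top hsplit hbound

/-- Lower bound for `W2sq` by integrating a function dominated by the cost against
arbitrary couplings; the function is a sum of marginal terms. -/
lemma W2sq_lower {μ₀ μ : Measure (Rd d)} (h0 : MemP2 μ₀) (hμ : MemP2 μ)
    {f g : Rd d → ℝ} (hfm : AEStronglyMeasurable f μ₀) (hgm : AEStronglyMeasurable g μ)
    (hf : Integrable f μ₀) (hg : Integrable g μ)
    (hdom : ∀ x y : Rd d, f x + g y ≤ ‖x - y‖ ^ 2) :
    ∫ x, f x ∂μ₀ + ∫ y, g y ∂μ ≤ W2sq μ₀ μ := by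
  haveI := h0.1; haveI := hμ.1
  set c : ℝ := ∫ x, f x ∂μ₀ + ∫ y, g y ∂μ with hc
  rcases le_or_gt c 0 with hc0 | hc0
  · exact hc0.trans ENNReal.toReal_nonneg
  have hlow : ENNReal.ofReal c ≤ W2sqE μ₀ μ := by
    unfold W2sqE
    refine le_iInf₂ fun γ hγ => ?_
    -- integrability of the marginal sum
    have hf' : Integrable (fun p : Rd d × Rd d => f p.1) γ := by
      have : Integrable f (γ.map Prod.fst) := by rw [hγ.1]; exact hf
      exact (integrable_map_measure (by rw [hγ.1]; exact hfm)
        measurable_fst.aemeasurable).mp this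
    have hg' : Integrable (fun p : Rd d × Rd d => g p.2) γ := by
      have : Integrable g (γ.map Prod.snd) := by rw [hγ.2]; exact hg
      exact (integrable_map_measure (by rw [hγ.2]; exact hgm)
        measurable_snd.aemeasurable).mp this
    have hh : Integrable (fun p : Rd d × Rd d => f p.1 + g p.2) γ := hf'.add hg'
    have hhp : Integrable (fun p : Rd d × Rd d => max (f p.1 + g p.2) 0) γ := hh.pos_part
    have hint : ∫ p : Rd d × Rd d, (f p.1 + g p.2) ∂γ = c := by
      rw [integral_add hf' hg', hc]
      congr 1
      · rw [← hγ.1, integral_map measurable_fst.aemeasurable (by rw [hγ.1]; exact hfm)]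
      · rw [← hγ.2, integral_map measurable_snd.aemeasurable (by rw [hγ.2]; exact hgm)]
    have step1 : c ≤ ∫ p : Rd d × Rd d, max (f p.1 + g p.2) 0 ∂γ := by
      rw [← hint]
      exact integral_mono hh hhp (fun p => le_max_left _ _)
    have step2 : ENNReal.ofReal (∫ p : Rd d × Rd d, max (f p.1 + g p.2) 0 ∂γ)
        ≤ transportCost γ := by
      rw [ofReal_integral_eq_lintegral_ofReal hhp
        (Filter.Eventually.of_forall fun p => le_max_right _ _)]
      refine lintegral_mono fun p => ENNReal.ofReal_le_ofReal ?_
      exact max_le (hdom p.1 p.2) (by positivity)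
    exact le_trans (le_trans (ENNReal.ofReal_le_ofReal step1) step2) (le_refl _)
  have hne := W2sqE_ne_top h0 hμ
  have := ENNReal.toReal_mono hne hlow
  rwa [ENNReal.toReal_ofReal hc0.le] at this

/-- Upper bound for `W2sq` against the plan induced by a map. -/
lemma W2sq_upper {μ₀ : Measure (Rd d)} (h0 : MemP2 μ₀) {T : Rd d → Rd d} (hT : Measurable T)
    {g : Rd d → ℝ} (hgi : Integrable g μ₀)
    (hae : ∀ᵐ x ∂μ₀, ‖x - T x‖ ^ 2 ≤ g x) :
    W2sq μ₀ (μ₀.map T) ≤ ∫ x, g x ∂μ₀ := by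
  haveI := h0.1
  have hm : Measurable fun x : Rd d => (x, T x) := measurable_id.prodMk hT
  have hcoup : IsCoupling (μ₀.map fun x => (x, T x)) μ₀ (μ₀.map T) := by
    constructor
    · rw [Measure.map_map measurable_fst hm]
      simp [Function.comp_def]
    · rw [Measure.map_map measurable_snd hm]
      simp [Function.comp_def]
  have hgnn : 0 ≤ᵐ[μ₀] g := by
    filter_upwards [hae] with x hx
    exact le_trans (by positivity) hx
  have hcost : transportCost (μ₀.map fun x => (x, T x)) ≤ ENNReal.ofReal (∫ x, g x ∂μ₀) := by
    unfold transportCost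
    have e : ∫⁻ p : Rd d × Rd d, ENNReal.ofReal (‖p.1 - p.2‖ ^ 2) ∂(μ₀.map fun x => (x, T x))
        = ∫⁻ x, ENNReal.ofReal (‖x - T x‖ ^ 2) ∂μ₀ :=
      lintegral_map (by fun_prop) hm
    rw [e, ofReal_integral_eq_lintegral_ofReal hgi hgnn]
    refine lintegral_mono_ae ?_
    filter_upwards [hae] with x hx
    exact ENNReal.ofReal_le_ofReal hx
  have hle : W2sqE μ₀ (μ₀.map T) ≤ ENNReal.ofReal (∫ x, g x ∂μ₀) := by
    refine le_trans ?_ hcost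
    unfold W2sqE; exact iInf₂_le (μ₀.map fun x => (x, T x)) hcoup
  have := ENNReal.toReal_mono (by simp) hle
  rwa [ENNReal.toReal_ofReal (integral_nonneg_of_ae hgnn)] at this


end Stmt7

/-- Lemma 4.4, part 1: the curve `ω(t) = [∇co((1−t)|·|²/2 + tu)]_# μ₀`
built from the viscosity (Hopf–Lax) solution of the Hamilton–Jacobi equation minimizes
`μ ↦ W₂²(μ₀,μ)/(2t) − ∫ φ(t,·) dμ` over `𝓟₂(ℝ^d)`. -/
theorem stmt_7 {d : ℕ} (φ : ℝ → Rd d → ℝ) (K : NNReal)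
    (hlip : LipschitzWith K (φ 0))
    (hHL : ∀ t : ℝ, 0 < t → ∀ x : Rd d,
      φ t x = ⨅ y : Rd d, (‖x - y‖ ^ 2 / (2 * t) + φ 0 y))
    (μ₀ : Measure (Rd d)) (hac : μ₀ ≪ volume) (h0 : MemP2 μ₀) :
    ∀ t : ℝ, 0 < t → ∀ μ : Measure (Rd d), MemP2 μ →
      W2sq μ₀ (μ₀.map (gradient (convEnv fun x => (1 - t) * (‖x‖ ^ 2 / 2)
          + t * (φ 0 x + ‖x‖ ^ 2 / 2)))) / (2 * t)
        - ∫ x, φ t x ∂(μ₀.map (gradient (convEnv fun x => (1 - t) * (‖x‖ ^ 2 / 2)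
            + t * (φ 0 x + ‖x‖ ^ 2 / 2))))
      ≤ W2sq μ₀ μ / (2 * t) - ∫ x, φ t x ∂μ := by
  intro t ht μ hμ
  have hrw : (fun x : Rd d => (1 - t) * (‖x‖ ^ 2 / 2) + t * (φ 0 x + ‖x‖ ^ 2 / 2))
      = Stmt7.Fe t (φ 0) := by
    funext x; simp only [Stmt7.Fe]; ring
  rw [hrw]
  have hVe : convEnv (Stmt7.Fe t (φ 0)) = Stmt7.Ve t (φ 0) := rfl
  rw [hVe]
  set φ0 : Rd d → ℝ := φ 0 with hφ0
  set φt : Rd d → ℝ := φ t with hφt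
  set v : Rd d → ℝ := Stmt7.Ve t φ0 with hv
  set T : Rd d → Rd d := gradient v with hTdef
  have hHLt : ∀ y : Rd d, φt y = ⨅ z : Rd d, (‖y - z‖ ^ 2 / (2 * t) + φ0 z) :=
    fun y => hHL t ht y
  haveI := h0.1
  haveI := hμ.1
  have hφtlip : LipschitzWith K φt := Stmt7.phi_lip ht hlip hHLt
  have hTmeas : Measurable T := Stmt7.measurable_gradient v
  have hvconv : ConvexOn ℝ univ v := Stmt7.convexOn_Ve ht hlip
  have hvcont : Continuous v := hvconv.locallyLipschitz.continuous
  set A : ℝ := 2 + 2 * t * K + t ^ 2 * K ^ 2 / 2 with hA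
  have hAnn : 0 ≤ A := by
    have : (0:ℝ) ≤ (K:ℝ) := K.coe_nonneg
    rw [hA]; positivity
  have hTb : ∀ x : Rd d, ‖T x‖ ≤ 2 * ‖x‖ + A := fun x => Stmt7.grad_Ve_bound ht hlip x
  -- integrability with respect to μ₀
  have hsq0 : Integrable (fun x : Rd d => ‖x‖ ^ 2) μ₀ := Stmt7.memP2_integrable_sq h0
  have hnrm0 : Integrable (fun x : Rd d => ‖x‖) μ₀ := Stmt7.memP2_integrable_norm h0
  have hKnn : (0:ℝ) ≤ (K:ℝ) := K.coe_nonneg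
  have hvint : Integrable v μ₀ := by
    refine Integrable.mono' (((integrable_const
        (|t * φ0 0 - t ^ 2 * K ^ 2 / 2| + t * |φ0 0|)).add
        (hsq0.const_mul (1/2))).add (hnrm0.const_mul (t * K)))
      hvcont.aestronglyMeasurable (Filter.Eventually.of_forall fun x => ?_)
    simp only [Pi.add_apply]
    have h1 := Stmt7.c0_le_Ve ht hlip (φ0 := φ0) x
    have h2 := Stmt7.Ve_le_Fe ht hlip (φ0 := φ0) x
    rw [← hv] at h1 h2
    have h3 := abs_le.1 (Stmt7.phi0_bound hlip x)
    have h4 := le_abs_self (t * φ0 0 - t ^ 2 * K ^ 2 / 2)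
    have h5 := neg_abs_le (t * φ0 0 - t ^ 2 * K ^ 2 / 2)
    have h6 := le_abs_self (φ0 0)
    have h7 := mul_le_mul_of_nonneg_left h6 ht.le
    have h8 := mul_le_mul_of_nonneg_left h3.2 ht.le
    rw [Real.norm_eq_abs, abs_le]
    simp only [Stmt7.Fe] at h2
    constructor
    · nlinarith [norm_nonneg x, sq_nonneg ‖x‖, abs_nonneg (φ0 0), abs_nonneg (t * φ0 0 - t ^ 2 * (K:ℝ) ^ 2 / 2), mul_nonneg (mul_nonneg ht.le hKnn) (norm_nonneg x), mul_nonneg ht.le (abs_nonneg (φ0 0))]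
    · nlinarith [mul_le_mul_of_nonneg_left h3.2 ht.le]
  have hφTint : Integrable (fun x : Rd d => φt (T x)) μ₀ := by
    refine Integrable.mono' ((integrable_const (|φt 0| + K * A)).add
        ((hnrm0.const_mul (2 * K))))
      ((hφtlip.continuous.measurable.comp hTmeas).aestronglyMeasurable)
      (Filter.Eventually.of_forall fun x => ?_)
    simp only [Pi.add_apply]
    have h1 := hφtlip.dist_le_mul (T x) 0
    rw [Real.dist_eq, dist_zero_right] at h1
    have h2 := abs_le.1 h1
    have h3 := hTb x
    have h4 := mul_le_mul_of_nonneg_left h3 hKnn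
    rw [Real.norm_eq_abs]
    have h5 : |φt (T x)| ≤ |φt 0| + |φt (T x) - φt 0| := by
      have := abs_add_le (φt 0) (φt (T x) - φt 0)
      simpa using this
    have h6 : |φt (T x) - φt 0| ≤ (K:ℝ) * ‖T x‖ := h1
    nlinarith
  set g1 : Rd d → ℝ := fun x => 2 * t * φt (T x) + ‖x‖ ^ 2 - 2 * v x with hg1
  have hg1int : Integrable g1 μ₀ := ((hφTint.const_mul (2 * t)).add hsq0).sub (hvint.const_mul 2)
  have hdae : ∀ᵐ x ∂μ₀, DifferentiableAt ℝ v x :=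
    Filter.Eventually.filter_mono hac.ae_le (Stmt7.ae_diff_of_convex hvconv)
  have hae : ∀ᵐ x ∂μ₀, ‖x - T x‖ ^ 2 ≤ g1 x := by
    filter_upwards [hdae] with x hx
    have := Stmt7.keyB ht hlip hHLt hx
    rw [← hv, ← hTdef] at this
    simp only [hg1]
    linarith
  -- upper bound along the transport plan
  have hup : W2sq μ₀ (μ₀.map T) ≤ ∫ x, g1 x ∂μ₀ := Stmt7.W2sq_upper h0 hTmeas hg1int hae
  have hsplit : ∫ x, g1 x ∂μ₀
      = 2 * t * ∫ x, φt (T x) ∂μ₀ + ∫ x, ‖x‖ ^ 2 ∂μ₀ - 2 * ∫ x, v x ∂μ₀ := by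
    have i3 : Integrable (fun x : Rd d => 2 * t * φt (T x)) μ₀ := hφTint.const_mul (2 * t)
    have i1 : Integrable (fun x : Rd d => 2 * t * φt (T x) + ‖x‖ ^ 2) μ₀ := i3.add hsq0
    have i2 : Integrable (fun x : Rd d => 2 * v x) μ₀ := hvint.const_mul 2
    simp only [hg1]
    rw [integral_sub i1 i2, integral_add i3 hsq0, integral_const_mul, integral_const_mul]
  have hω : ∫ y, φt y ∂(μ₀.map T) = ∫ x, φt (T x) ∂μ₀ :=
    integral_map hTmeas.aemeasurable hφtlip.continuous.aestronglyMeasurable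
  -- lower bound for arbitrary μ
  have hφtμ : Integrable φt μ := Stmt7.memP2_integrable_lipschitz hφtlip hμ
  have hlow : ∫ x, (‖x‖ ^ 2 - 2 * v x) ∂μ₀ + ∫ y, (2 * t * φt y) ∂μ ≤ W2sq μ₀ μ := by
    refine Stmt7.W2sq_lower h0 hμ
      ((continuous_norm.pow 2).sub (continuous_const.mul hvcont)).aestronglyMeasurable
      (continuous_const.mul hφtlip.continuous).aestronglyMeasurable
      (hsq0.sub (hvint.const_mul 2)) (hφtμ.const_mul (2 * t)) ?_
    intro x y
    have := Stmt7.keyA ht hlip hHLt x y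
    rw [← hv] at this
    have e : ‖x - y‖ ^ 2 / 2 * 2 = ‖x - y‖ ^ 2 := by ring
    linarith
  have hlowsplit : ∫ x, (‖x‖ ^ 2 - 2 * v x) ∂μ₀
      = ∫ x, ‖x‖ ^ 2 ∂μ₀ - 2 * ∫ x, v x ∂μ₀ := by
    have i2 : Integrable (fun x : Rd d => 2 * v x) μ₀ := hvint.const_mul 2
    rw [integral_sub hsq0 i2, integral_const_mul]
  have hμsplit : ∫ y, (2 * t * φt y) ∂μ = 2 * t * ∫ y, φt y ∂μ := integral_const_mul _ _
  -- final arithmetic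
  set D : ℝ := ∫ x, ‖x‖ ^ 2 ∂μ₀ - 2 * ∫ x, v x ∂μ₀ with hD
  set Iω : ℝ := ∫ x, φt (T x) ∂μ₀ with hIω
  set Iμ : ℝ := ∫ y, φt y ∂μ with hIμ
  rw [hω]
  have h2t : (0:ℝ) < 2 * t := by linarith
  have hup' : W2sq μ₀ (μ₀.map T) ≤ 2 * t * Iω + D := by
    rw [hsplit] at hup; rw [hD]; linarith
  have hlow' : 2 * t * Iμ + D ≤ W2sq μ₀ μ := by
    rw [hlowsplit, hμsplit] at hlow; rw [hD]; linarith
  have e1 : (2 * t * Iω + D) / (2 * t) = Iω + D / (2 * t) := by field_simp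
  have e2 : (2 * t * Iμ + D) / (2 * t) = Iμ + D / (2 * t) := by field_simp
  have d1 : W2sq μ₀ (μ₀.map T) / (2 * t) ≤ (2 * t * Iω + D) / (2 * t) := by
    apply div_le_div_of_nonneg_right hup' h2t.le
  have d2 : (2 * t * Iμ + D) / (2 * t) ≤ W2sq μ₀ μ / (2 * t) := by
    apply div_le_div_of_nonneg_right hlow' h2t.le
  rw [e1] at d1
  rw [e2] at d2
  linarith
end
end

section
/- Let α > 1, β = α−1, let μ₀ ∈ 𝓟₂(ℝ^d) be absolutely continuous and let u be the Brenier potential from μ₀ to μ₁ with x ↦ αu(x) − β|x|²/2 convex, so that ω(t) = ((1−t)Id + t∇u)_# μ₀ is a globally length-minimizing geodesic on [0,α]. Then the functional 𝓕(μ₀,μ₁;ρ) = αW₂²(ρ,μ₁) − βW₂²(ρ,μ₀) attains its lower bound −αβ W₂²(μ₀,μ₁) at ρ = ω(α), and ω(α) is the only measure attaining it; in particular W₂²(μ₀,ω(α)) = α²W₂²(μ₀,μ₁) and W₂²(μ₁,ω(α)) = β²W₂²(μ₀,μ₁). -/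
open MeasureTheory Set
open scoped ENNReal RealInnerProductSpace

noncomputable section

open Filter
open scoped Topology ProbabilityTheory

namespace Helpers

variable {d : ℕ}

lemma memP2_integrable_normsq {μ : Measure (Rd d)} (h : MemP2 μ) :
    Integrable (fun x : Rd d => ‖x‖^2) μ := by
  refine ⟨(continuous_norm.pow 2).aestronglyMeasurable, ?_⟩
  rw [hasFiniteIntegral_iff_ofReal (Eventually.of_forall fun x => by positivity)]
  exact h.2

lemma coupling_prob {γ : Measure (Rd d × Rd d)} {μ ν : Measure (Rd d)}
    [IsProbabilityMeasure μ] (hγ : IsCoupling γ μ ν) : IsProbabilityMeasure γ := by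
  constructor
  calc γ univ = γ.map Prod.fst univ := by
        rw [Measure.map_apply measurable_fst MeasurableSet.univ, preimage_univ]
    _ = 1 := by rw [hγ.1]; exact measure_univ

lemma integrable_fst {γ : Measure (Rd d × Rd d)} {μ ν : Measure (Rd d)}
    (hγ : IsCoupling γ μ ν) {f : Rd d → ℝ} (hf : AEStronglyMeasurable f μ)
    (hint : Integrable f μ) : Integrable (fun p : Rd d × Rd d => f p.1) γ := by
  rw [← hγ.1] at hint
  have h := (integrable_map_measure (by rw [hγ.1]; exact hf)
    measurable_fst.aemeasurable).1 hint
  exact h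

lemma integrable_snd {γ : Measure (Rd d × Rd d)} {μ ν : Measure (Rd d)}
    (hγ : IsCoupling γ μ ν) {f : Rd d → ℝ} (hf : AEStronglyMeasurable f ν)
    (hint : Integrable f ν) : Integrable (fun p : Rd d × Rd d => f p.2) γ := by
  rw [← hγ.2] at hint
  have h := (integrable_map_measure (by rw [hγ.2]; exact hf)
    measurable_snd.aemeasurable).1 hint
  exact h

lemma integral_fst {γ : Measure (Rd d × Rd d)} {μ ν : Measure (Rd d)}
    (hγ : IsCoupling γ μ ν) {f : Rd d → ℝ} (hf : AEStronglyMeasurable f μ) :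
    ∫ x, f x ∂μ = ∫ p, f p.1 ∂γ := by
  rw [← hγ.1, integral_map measurable_fst.aemeasurable (by rw [hγ.1]; exact hf)]

lemma integral_snd {γ : Measure (Rd d × Rd d)} {μ ν : Measure (Rd d)}
    (hγ : IsCoupling γ μ ν) {f : Rd d → ℝ} (hf : AEStronglyMeasurable f ν) :
    ∫ x, f x ∂ν = ∫ p, f p.2 ∂γ := by
  rw [← hγ.2, integral_map measurable_snd.aemeasurable (by rw [hγ.2]; exact hf)]

lemma coupling_int_normsq_fst {γ : Measure (Rd d × Rd d)} {μ ν : Measure (Rd d)}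
    (hγ : IsCoupling γ μ ν) (hμ : MemP2 μ) :
    Integrable (fun p : Rd d × Rd d => ‖p.1‖^2) γ :=
  integrable_fst hγ (continuous_norm.pow 2).aestronglyMeasurable (memP2_integrable_normsq hμ)

lemma coupling_int_normsq_snd {γ : Measure (Rd d × Rd d)} {μ ν : Measure (Rd d)}
    (hγ : IsCoupling γ μ ν) (hν : MemP2 ν) :
    Integrable (fun p : Rd d × Rd d => ‖p.2‖^2) γ :=
  integrable_snd hγ (continuous_norm.pow 2).aestronglyMeasurable (memP2_integrable_normsq hν)

lemma coupling_int_cost {γ : Measure (Rd d × Rd d)} {μ ν : Measure (Rd d)}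
    (hγ : IsCoupling γ μ ν) (hμ : MemP2 μ) (hν : MemP2 ν) :
    Integrable (fun p : Rd d × Rd d => ‖p.1 - p.2‖^2) γ := by
  refine Integrable.mono' (((coupling_int_normsq_fst hγ hμ).const_mul 2).add
    ((coupling_int_normsq_snd hγ hν).const_mul 2))
    ((continuous_fst.sub continuous_snd).norm.pow 2).aestronglyMeasurable
    (Eventually.of_forall fun p => ?_)
  have h1 : ‖p.1 - p.2‖ ≤ ‖p.1‖ + ‖p.2‖ := norm_sub_le _ _
  have h2 : (0:ℝ) ≤ ‖p.1 - p.2‖ := norm_nonneg _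
  rw [Real.norm_eq_abs, abs_of_nonneg (by positivity)]
  simp only [Pi.add_apply]
  have h3 := mul_le_mul h1 h1 h2 (by positivity : (0:ℝ) ≤ ‖p.1‖ + ‖p.2‖)
  nlinarith [h3, sq_nonneg (‖p.1‖ - ‖p.2‖)]

lemma coupling_int_inner {γ : Measure (Rd d × Rd d)} {μ ν : Measure (Rd d)}
    (hγ : IsCoupling γ μ ν) (hμ : MemP2 μ) (hν : MemP2 ν) :
    Integrable (fun p : Rd d × Rd d => ⟪p.1, p.2⟫) γ := by
  refine Integrable.mono' (((coupling_int_normsq_fst hγ hμ).add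
    (coupling_int_normsq_snd hγ hν)).const_mul (1/2 : ℝ))
    continuous_inner.aestronglyMeasurable
    (Eventually.of_forall fun p => ?_)
  have h1 : |⟪p.1, p.2⟫| ≤ ‖p.1‖ * ‖p.2‖ := abs_real_inner_le_norm _ _
  rw [Real.norm_eq_abs]
  simp only [Pi.mul_apply, Pi.add_apply]
  nlinarith [norm_nonneg p.1, norm_nonneg p.2, sq_nonneg (‖p.1‖ - ‖p.2‖)]

lemma transportCost_eq_ofReal {γ : Measure (Rd d × Rd d)} {μ ν : Measure (Rd d)}
    (hγ : IsCoupling γ μ ν) (hμ : MemP2 μ) (hν : MemP2 ν) :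
    transportCost γ = ENNReal.ofReal (∫ p, ‖p.1 - p.2‖^2 ∂γ) := by
  rw [transportCost, ← ofReal_integral_eq_lintegral_ofReal
    (coupling_int_cost hγ hμ hν) (Eventually.of_forall fun p => by positivity)]

lemma cost_expand {γ : Measure (Rd d × Rd d)} {μ ν : Measure (Rd d)}
    (hγ : IsCoupling γ μ ν) (hμ : MemP2 μ) (hν : MemP2 ν) :
    ∫ p, ‖p.1 - p.2‖^2 ∂γ
      = ∫ x, ‖x‖^2 ∂μ + ∫ x, ‖x‖^2 ∂ν - 2 * ∫ p, ⟪p.1, p.2⟫ ∂γ := by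
  have hpt : ∀ p : Rd d × Rd d, ‖p.1 - p.2‖^2 = ‖p.1‖^2 + ‖p.2‖^2 - 2 * ⟪p.1, p.2⟫ := by
    intro p
    rw [norm_sub_sq_real]; ring
  calc ∫ p, ‖p.1 - p.2‖^2 ∂γ
      = ∫ p, (‖p.1‖^2 + ‖p.2‖^2 - 2 * ⟪p.1, p.2⟫) ∂γ := by
        exact integral_congr_ae (Eventually.of_forall hpt)
    _ = ∫ p, (‖(p : Rd d × Rd d).1‖^2 + ‖p.2‖^2) ∂γ - ∫ p, 2 * ⟪p.1, p.2⟫ ∂γ := by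
        exact integral_sub ((coupling_int_normsq_fst hγ hμ).add
          (coupling_int_normsq_snd hγ hν)) ((coupling_int_inner hγ hμ hν).const_mul 2)
    _ = ∫ x, ‖x‖^2 ∂μ + ∫ x, ‖x‖^2 ∂ν - 2 * ∫ p, ⟪p.1, p.2⟫ ∂γ := by
        rw [integral_add (coupling_int_normsq_fst hγ hμ) (coupling_int_normsq_snd hγ hν),
          integral_const_mul,
          integral_fst hγ (f := fun x : Rd d => ‖x‖^2) (continuous_norm.pow 2).aestronglyMeasurable,
          integral_snd hγ (f := fun x : Rd d => ‖x‖^2) (continuous_norm.pow 2).aestronglyMeasurable]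

lemma W2sqE_le_cost {γ : Measure (Rd d × Rd d)} {μ ν : Measure (Rd d)}
    (hγ : IsCoupling γ μ ν) : W2sqE μ ν ≤ transportCost γ :=
  iInf₂_le γ hγ

lemma prod_coupling (μ ν : Measure (Rd d)) [IsProbabilityMeasure μ] [IsProbabilityMeasure ν] :
    IsCoupling (μ.prod ν) μ ν := by
  constructor
  · rw [Measure.map_fst_prod]; simp
  · rw [Measure.map_snd_prod]; simp

lemma W2sqE_lt_top {μ ν : Measure (Rd d)} (hμ : MemP2 μ) (hν : MemP2 ν) :
    W2sqE μ ν < ⊤ := by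
  have : IsProbabilityMeasure μ := hμ.1
  have : IsProbabilityMeasure ν := hν.1
  refine lt_of_le_of_lt (W2sqE_le_cost (prod_coupling μ ν)) ?_
  rw [transportCost_eq_ofReal (prod_coupling μ ν) hμ hν]
  exact ENNReal.ofReal_lt_top

lemma W2sq_nonneg (μ ν : Measure (Rd d)) : 0 ≤ W2sq μ ν := ENNReal.toReal_nonneg

lemma W2sq_le_cost {γ : Measure (Rd d × Rd d)} {μ ν : Measure (Rd d)}
    (hγ : IsCoupling γ μ ν) (hμ : MemP2 μ) (hν : MemP2 ν) :
    W2sq μ ν ≤ ∫ p, ‖p.1 - p.2‖^2 ∂γ := by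
  have h := W2sqE_le_cost hγ
  rw [transportCost_eq_ofReal hγ hμ hν] at h
  have := ENNReal.toReal_mono ENNReal.ofReal_ne_top h
  rwa [ENNReal.toReal_ofReal (integral_nonneg fun p => by positivity)] at this

lemma W2sqE_comm (μ ν : Measure (Rd d)) : W2sqE μ ν = W2sqE ν μ := by
  have key : ∀ (a b : Measure (Rd d)), W2sqE a b ≤ W2sqE b a := by
    intro a b
    refine le_iInf₂ fun γ hγ => ?_
    have hsw : IsCoupling (γ.map Prod.swap) a b := by
      constructor
      · rw [Measure.map_map measurable_fst measurable_swap]; exact hγ.2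
      · rw [Measure.map_map measurable_snd measurable_swap]; exact hγ.1
    refine le_trans (W2sqE_le_cost hsw) (le_of_eq ?_)
    rw [transportCost, transportCost, lintegral_map ?_ measurable_swap]
    · simp [norm_sub_rev]
    · exact ((continuous_fst.sub continuous_snd).norm.pow 2).measurable.ennreal_ofReal
  exact le_antisymm (key μ ν) (key ν μ)

lemma W2sqE_self (μ : Measure (Rd d)) [IsProbabilityMeasure μ] : W2sqE μ μ = 0 := by
  have hm : Measurable fun x : Rd d => (x, x) := measurable_id.prodMk measurable_id
  have hγ : IsCoupling (μ.map (fun x => (x, x))) μ μ := by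
    constructor
    · rw [Measure.map_map measurable_fst hm]
      have e : (Prod.fst ∘ fun x : Rd d => (x, x)) = id := rfl
      rw [e, Measure.map_id]
    · rw [Measure.map_map measurable_snd hm]
      have e : (Prod.snd ∘ fun x : Rd d => (x, x)) = id := rfl
      rw [e, Measure.map_id]
  refine le_antisymm (le_trans (W2sqE_le_cost hγ) (le_of_eq ?_)) zero_le
  rw [transportCost, lintegral_map ?_ hm]
  · simp
  · exact ((continuous_fst.sub continuous_snd).norm.pow 2).measurable.ennreal_ofReal

lemma glue {d : ℕ} (μ m : Measure (Rd d)) [IsProbabilityMeasure μ] [IsProbabilityMeasure m]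
    (S : Rd d → Rd d) (hS : Measurable S)
    (γ : Measure (Rd d × Rd d)) (hγ : IsCoupling γ μ (m.map S)) :
    ∃ τ : Measure (Rd d × Rd d), IsCoupling τ μ m ∧
      (τ.map (fun p => (p.1, S p.2))) = γ := by
  have hγp : IsProbabilityMeasure γ := coupling_prob hγ
  set σ : Measure (Rd d × Rd d) := γ.map Prod.swap with hσdef
  have hσfst : σ.fst = m.map S := by
    rw [Measure.fst, hσdef, Measure.map_map measurable_fst measurable_swap]
    exact hγ.2
  have hσp : IsProbabilityMeasure σ := Measure.isProbabilityMeasure_map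
    measurable_swap.aemeasurable
  set K := σ.condKernel with hK
  set τ' : Measure (Rd d × Rd d) := m ⊗ₘ (K.comap S hS) with hτ'
  -- key: τ'.map (Prod.map S id) = σ
  have hkey : τ'.map (Prod.map S id) = σ := by
    ext t ht
    rw [Measure.map_apply (hS.prodMap measurable_id) ht, hτ',
      Measure.compProd_apply ((hS.prodMap measurable_id) ht)]
    have : ∀ a, (K.comap S hS) a (Prod.mk a ⁻¹' (Prod.map S id ⁻¹' t))
        = K (S a) (Prod.mk (S a) ⁻¹' t) := by
      intro a; rfl
    simp_rw [this]
    have h1 : σ t = ∫⁻ b, K b (Prod.mk b ⁻¹' t) ∂(m.map S) := by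
      conv_lhs => rw [← Measure.disintegrate σ σ.condKernel]
      rw [Measure.compProd_apply ht, hσfst]
    rw [h1, lintegral_map (ProbabilityTheory.Kernel.measurable_kernel_prodMk_left ht) hS]
  have hγσ : γ = σ.map Prod.swap := by
    rw [hσdef, Measure.map_map measurable_swap measurable_swap]
    have : (Prod.swap ∘ Prod.swap : Rd d × Rd d → Rd d × Rd d) = id := by
      ext p <;> simp
    rw [this, Measure.map_id]
  have hτsnd : τ'.map Prod.snd = μ := by
    have h2 : γ.map Prod.fst = μ := hγ.1
    rw [hγσ, Measure.map_map measurable_fst measurable_swap] at h2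
    have e1 : (Prod.fst ∘ Prod.swap : Rd d × Rd d → Rd d) = Prod.snd := rfl
    rw [e1, ← hkey, Measure.map_map measurable_snd (hS.prodMap measurable_id)] at h2
    have e2 : (Prod.snd ∘ Prod.map S id : Rd d × Rd d → Rd d) = Prod.snd := rfl
    rwa [e2] at h2
  refine ⟨τ'.map Prod.swap, ⟨?_, ?_⟩, ?_⟩
  · rw [Measure.map_map measurable_fst measurable_swap]
    exact hτsnd
  · rw [Measure.map_map measurable_snd measurable_swap]
    have e1 : (Prod.snd ∘ Prod.swap : Rd d × Rd d → Rd d) = Prod.fst := rfl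
    rw [e1]
    have := Measure.fst_compProd m (K.comap S hS)
    rw [Measure.fst] at this
    exact this
  · rw [Measure.map_map (show Measurable fun p : Rd d × Rd d => (p.1, S p.2) from
      measurable_fst.prodMk (hS.comp measurable_snd)) measurable_swap,
      hγσ, ← hkey, Measure.map_map measurable_swap (hS.prodMap measurable_id)]
    rfl

lemma memP2_integrable_norm {μ : Measure (Rd d)} (h : MemP2 μ) :
    Integrable (fun x : Rd d => ‖x‖) μ := by
  have : IsProbabilityMeasure μ := h.1
  refine Integrable.mono' ((memP2_integrable_normsq h).add (integrable_const 1))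
    continuous_norm.aestronglyMeasurable (Eventually.of_forall fun x => ?_)
  simp only [Pi.add_apply]
  rw [Real.norm_eq_abs, abs_of_nonneg (norm_nonneg _)]
  nlinarith [norm_nonneg x, sq_nonneg (‖x‖ - 1)]

lemma integrable_normsq_comp {μ : Measure (Rd d)} {S : Rd d → Rd d} (hS : Measurable S)
    (hν : MemP2 (μ.map S)) : Integrable (fun x => ‖S x‖^2) μ := by
  have h := memP2_integrable_normsq hν
  exact (integrable_map_measure (continuous_norm.pow 2).aestronglyMeasurable
    hS.aemeasurable).1 h

/-- Optimality of couplings supported on the graph of an a.e. subgradient map. -/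
lemma fenchel_opt {μ : Measure (Rd d)} (hμ : MemP2 μ) {S : Rd d → Rd d}
    (hS : Measurable S) (hν : MemP2 (μ.map S))
    {ψ : Rd d → ℝ} (hψc : Continuous ψ)
    (hsub : ∀ᵐ x ∂μ, ∀ y, ψ x + ⟪S x, y - x⟫ ≤ ψ y) :
    W2sqE μ (μ.map S) = ENNReal.ofReal (∫ x, ‖x - S x‖^2 ∂μ) := by
  have hprob : IsProbabilityMeasure μ := hμ.1
  haveI : (MeasureTheory.ae μ).NeBot := ae_neBot.2 (IsProbabilityMeasure.ne_zero μ)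
  have hm0 : Measurable fun x : Rd d => (x, S x) := measurable_id.prodMk hS
  have hγ₀ : IsCoupling (μ.map fun x => (x, S x)) μ (μ.map S) := by
    constructor
    · rw [Measure.map_map measurable_fst hm0]
      have e : (Prod.fst ∘ fun x : Rd d => (x, S x)) = id := rfl
      rw [e, Measure.map_id]
    · rw [Measure.map_map measurable_snd hm0]
      rfl
  have hIS : Integrable (fun x => ‖S x‖^2) μ := integrable_normsq_comp hS hν
  have hIx : Integrable (fun x : Rd d => ‖x‖^2) μ := memP2_integrable_normsq hμ
  -- cost of the graph coupling
  have hcostm : Measurable fun x : Rd d => ‖x - S x‖^2 :=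
    ((measurable_id.sub hS).norm.pow_const 2)
  have hcost_int : Integrable (fun x : Rd d => ‖x - S x‖^2) μ := by
    refine Integrable.mono' ((hIx.const_mul 2).add (hIS.const_mul 2))
      hcostm.aestronglyMeasurable (Eventually.of_forall fun x => ?_)
    simp only [Pi.add_apply]
    rw [Real.norm_eq_abs, abs_of_nonneg (by positivity)]
    have h1 : ‖x - S x‖ ≤ ‖x‖ + ‖S x‖ := norm_sub_le _ _
    have h3 := mul_le_mul h1 h1 (norm_nonneg _) (by positivity : (0:ℝ) ≤ ‖x‖ + ‖S x‖)
    nlinarith [sq_nonneg (‖x‖ - ‖S x‖)]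
  have htc₀ : transportCost (μ.map fun x => (x, S x))
      = ENNReal.ofReal (∫ x, ‖x - S x‖^2 ∂μ) := by
    rw [transportCost, lintegral_map ?_ hm0]
    · rw [← ofReal_integral_eq_lintegral_ofReal hcost_int
        (Eventually.of_forall fun x => by positivity)]
    · exact ((continuous_fst.sub continuous_snd).norm.pow 2).measurable.ennreal_ofReal
  -- ψ is integrable
  obtain ⟨x₀, hx₀⟩ := hsub.exists
  have hψint : Integrable ψ μ := by
    have hbound : Integrable (fun x : Rd d => |ψ x₀| + ‖S x₀‖ * (‖x‖ + ‖x₀‖)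
        + (1/2) * (‖S x‖^2 + 1) * (‖x₀‖ + 1) + (1/2) * ‖x‖^2 * (‖x₀‖+1)) μ := by
      refine Integrable.add (Integrable.add (integrable_const _) ?_) ?_ |>.add ?_
      · exact ((memP2_integrable_norm hμ).add (integrable_const _)).const_mul _
      · exact (((hIS.add (integrable_const 1)).const_mul _).mul_const _)
      · exact ((hIx.const_mul _).mul_const _)
    refine Integrable.mono' hbound hψc.aestronglyMeasurable ?_
    filter_upwards [hsub] with x hx
    have hlow := hx₀ x
    have hup := hx x₀
    have e1 : |⟪S x₀, x - x₀⟫| ≤ ‖S x₀‖ * ‖x - x₀‖ := abs_real_inner_le_norm _ _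
    have e2 : |⟪S x, x₀ - x⟫| ≤ ‖S x‖ * ‖x₀ - x‖ := abs_real_inner_le_norm _ _
    have e3 : ‖x - x₀‖ ≤ ‖x‖ + ‖x₀‖ := norm_sub_le _ _
    have e4 : ‖x₀ - x‖ ≤ ‖x₀‖ + ‖x‖ := norm_sub_le _ _
    have e5 : ‖S x‖ * ‖x₀ - x‖ ≤ ‖S x‖ * (‖x₀‖ + ‖x‖) :=
      mul_le_mul_of_nonneg_left e4 (norm_nonneg _)
    have e6 : ‖S x‖ * (‖x₀‖ + ‖x‖) ≤ (1/2) * (‖S x‖^2 + 1) * (‖x₀‖ + 1)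
        + (1/2) * ‖x‖^2 * (‖x₀‖+1) := by
      nlinarith [norm_nonneg (S x), norm_nonneg x, norm_nonneg x₀, sq_nonneg (‖S x‖ - 1),
        sq_nonneg (‖S x‖ - ‖x‖), sq_nonneg ‖x‖, sq_nonneg (‖S x‖ * ‖x₀‖)]
    rw [Real.norm_eq_abs, abs_le]
    constructor
    · have : ψ x₀ - ‖S x₀‖ * ‖x - x₀‖ ≤ ψ x := by
        have := abs_le.1 e1
        nlinarith [hlow]
      have h7 : ‖S x₀‖ * ‖x - x₀‖ ≤ ‖S x₀‖ * (‖x‖ + ‖x₀‖) :=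
        mul_le_mul_of_nonneg_left e3 (norm_nonneg _)
      have h8 : -|ψ x₀| ≤ ψ x₀ := neg_abs_le _
      nlinarith [mul_nonneg (norm_nonneg (S x)) (norm_nonneg x),
        mul_nonneg (mul_nonneg (by norm_num : (0:ℝ) ≤ 1/2)
          (by positivity : (0:ℝ) ≤ ‖S x‖^2 + 1)) (by positivity : (0:ℝ) ≤ ‖x₀‖ + 1),
        mul_nonneg (mul_nonneg (by norm_num : (0:ℝ) ≤ 1/2)
          (by positivity : (0:ℝ) ≤ ‖x‖^2)) (by positivity : (0:ℝ) ≤ ‖x₀‖ + 1)]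
    · have : ψ x ≤ ψ x₀ - ⟪S x, x₀ - x⟫ := by linarith [hup]
      have h9 := abs_le.1 e2
      have h10 : ψ x₀ ≤ |ψ x₀| := le_abs_self _
      nlinarith [mul_nonneg (norm_nonneg (S x₀)) (by positivity : (0:ℝ) ≤ ‖x‖ + ‖x₀‖)]
  -- the inner-product integral: ⟪S a, a⟫ integrable
  have hinnerSa : Integrable (fun a : Rd d => ⟪S a, a⟫) μ := by
    refine Integrable.mono' ((hIS.add hIx).const_mul (1/2 : ℝ))
      (Measurable.aestronglyMeasurable (hS.inner measurable_id))
      (Eventually.of_forall fun a => ?_)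
    have h1 : |⟪S a, a⟫| ≤ ‖S a‖ * ‖a‖ := abs_real_inner_le_norm _ _
    rw [Real.norm_eq_abs]
    simp only [Pi.mul_apply, Pi.add_apply]
    nlinarith [sq_nonneg (‖S a‖ - ‖a‖), norm_nonneg (S a), norm_nonneg a]
  have hγ₀inner : ∫ p, ⟪p.1, p.2⟫ ∂(μ.map fun x => (x, S x)) = ∫ x, ⟪x, S x⟫ ∂μ := by
    rw [integral_map hm0.aemeasurable continuous_inner.aestronglyMeasurable]
  -- main comparison: for any coupling γ, the inner-product integral is maximized by γ₀
  have hmain : ∀ γ : Measure (Rd d × Rd d), IsCoupling γ μ (μ.map S) →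
      ∫ p, ⟪p.1, p.2⟫ ∂γ ≤ ∫ x, ⟪x, S x⟫ ∂μ := by
    intro γ hγ
    haveI : IsProbabilityMeasure (μ.map S) := hν.1
    obtain ⟨τ, hτc, hτmap⟩ := glue μ μ S hS γ hγ
    haveI : IsProbabilityMeasure τ := coupling_prob hτc
    have hint_eq : ∫ p, ⟪p.1, p.2⟫ ∂γ = ∫ p : Rd d × Rd d, ⟪p.1, S p.2⟫ ∂τ := by
      rw [← hτmap, integral_map ?_ continuous_inner.aestronglyMeasurable]
      exact (measurable_fst.prodMk (hS.comp measurable_snd)).aemeasurable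
    have hsubτ : ∀ᵐ p ∂τ, ∀ y, ψ p.2 + ⟪S p.2, y - p.2⟫ ≤ ψ y := by
      refine ae_of_ae_map (f := (Prod.snd : Rd d × Rd d → Rd d))
        measurable_snd.aemeasurable (?_ :
          ∀ᵐ a ∂(τ.map Prod.snd), ∀ y, ψ a + ⟪S a, y - a⟫ ≤ ψ y)
      rw [hτc.2]; exact hsub
    -- integrabilities over τ
    have i1 : Integrable (fun p : Rd d × Rd d => ψ p.1) τ :=
      integrable_fst hτc hψc.aestronglyMeasurable hψint
    have i2 : Integrable (fun p : Rd d × Rd d => ψ p.2) τ :=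
      integrable_snd hτc hψc.aestronglyMeasurable hψint
    have i3 : Integrable (fun p : Rd d × Rd d => ⟪S p.2, p.2⟫) τ :=
      integrable_snd hτc (Measurable.aestronglyMeasurable (hS.inner measurable_id)) hinnerSa
    have i0 : Integrable (fun p : Rd d × Rd d => ⟪p.1, S p.2⟫) τ := by
      refine Integrable.mono' (((coupling_int_normsq_fst hτc hμ).add
        (integrable_snd hτc (hS.norm.pow_const 2).aestronglyMeasurable hIS)).const_mul
          (1/2 : ℝ))
        (Measurable.aestronglyMeasurable (measurable_fst.inner (hS.comp measurable_snd)))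
        (Eventually.of_forall fun p => ?_)
      have h1 : |⟪p.1, S p.2⟫| ≤ ‖p.1‖ * ‖S p.2‖ := abs_real_inner_le_norm _ _
      rw [Real.norm_eq_abs]
      simp only [Pi.mul_apply, Pi.add_apply]
      nlinarith [sq_nonneg (‖p.1‖ - ‖S p.2‖), norm_nonneg p.1, norm_nonneg (S p.2)]
    have i12 : Integrable (fun p : Rd d × Rd d => ψ p.1 - ψ p.2) τ := i1.sub i2
    have i123 : Integrable (fun p : Rd d × Rd d => ψ p.1 - ψ p.2 + ⟪S p.2, p.2⟫) τ :=
      i12.add i3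
    have hle : ∫ p : Rd d × Rd d, ⟪p.1, S p.2⟫ ∂τ
        ≤ ∫ p : Rd d × Rd d, (ψ p.1 - ψ p.2 + ⟪S p.2, p.2⟫) ∂τ := by
      refine integral_mono_ae i0 i123 ?_
      filter_upwards [hsubτ] with p hp
      have := hp p.1
      have hcomm : ⟪p.1, S p.2⟫ = ⟪S p.2, p.1⟫ := real_inner_comm _ _
      have hexp : ⟪S p.2, p.1 - p.2⟫ = ⟪S p.2, p.1⟫ - ⟪S p.2, p.2⟫ := inner_sub_right _ _ _
      linarith
    have heval : ∫ p : Rd d × Rd d, (ψ p.1 - ψ p.2 + ⟪S p.2, p.2⟫) ∂τ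
        = ∫ x, ⟪x, S x⟫ ∂μ := by
      rw [integral_add i12 i3, integral_sub i1 i2,
        ← integral_fst hτc hψc.aestronglyMeasurable,
        ← integral_snd hτc hψc.aestronglyMeasurable,
        ← integral_snd hτc (f := fun a : Rd d => ⟪S a, a⟫)
          (Measurable.aestronglyMeasurable (hS.inner measurable_id))]
      have : ∫ a, ⟪S a, a⟫ ∂μ = ∫ a, ⟪a, S a⟫ ∂μ := by
        refine integral_congr_ae (Eventually.of_forall fun a => real_inner_comm _ _)
      rw [this]; ring
    linarith [hint_eq ▸ le_trans hle (le_of_eq heval)]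
  refine le_antisymm (le_trans (W2sqE_le_cost hγ₀) (le_of_eq htc₀)) ?_
  refine le_iInf₂ fun γ hγ => ?_
  rw [transportCost_eq_ofReal hγ hμ hν]
  refine ENNReal.ofReal_le_ofReal ?_
  have e₀ : ∫ p, ‖p.1 - p.2‖^2 ∂(μ.map fun x => (x, S x)) = ∫ x, ‖x - S x‖^2 ∂μ := by
    rw [integral_map hm0.aemeasurable
      (f := fun p : Rd d × Rd d => ‖p.1 - p.2‖^2)
      ((continuous_fst.sub continuous_snd).norm.pow 2).aestronglyMeasurable]
  rw [← e₀, cost_expand hγ hμ hν, cost_expand hγ₀ hμ hν]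
  have h1 := hmain γ hγ
  rw [← hγ₀inner] at h1
  linarith

lemma measure_le_of_closed {μ ν : Measure (Rd d)} [IsProbabilityMeasure μ]
    [IsProbabilityMeasure ν] (h : W2sqE μ ν = 0) {F : Set (Rd d)} (hF : IsClosed F) :
    μ F ≤ ν F := by
  rcases F.eq_empty_or_nonempty with hFe | hFne
  · subst hFe
    simp
  -- each thickening bounds μ F
  have hstep : ∀ n : ℕ, μ F ≤ ν {y | Metric.infDist y F ≤ 1/(n+1)} := by
    intro n
    set δ : ℝ := 1/(n+1) with hδ
    have hδpos : 0 < δ := by positivity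
    refine ENNReal.le_of_forall_pos_le_add fun η hη hlt => ?_
    -- pick a coupling with small cost
    have hex : ∃ γ : Measure (Rd d × Rd d), IsCoupling γ μ ν ∧
        transportCost γ < ENNReal.ofReal (δ^2) * η := by
      have hpos : (0:ℝ≥0∞) < ENNReal.ofReal (δ^2) * η := by
        apply ENNReal.mul_pos
        · simp [ENNReal.ofReal_pos]; positivity
        · simpa using hη.ne'
      have := h ▸ hpos
      rw [W2sqE] at this
      obtain ⟨γ, hγ⟩ := iInf_lt_iff.1 this
      obtain ⟨hc, hlt'⟩ := iInf_lt_iff.1 hγ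
      exact ⟨γ, hc, hlt'⟩
    obtain ⟨γ, hγc, hγcost⟩ := hex
    have hFm : MeasurableSet F := hF.measurableSet
    have hνm : MeasurableSet {y : Rd d | Metric.infDist y F ≤ δ} :=
      (isClosed_le (Metric.continuous_infDist_pt F) continuous_const).measurableSet
    have hsplit : (Prod.fst ⁻¹' F : Set (Rd d × Rd d)) ⊆
        Prod.snd ⁻¹' {y | Metric.infDist y F ≤ δ}
        ∪ {p : Rd d × Rd d | ENNReal.ofReal (δ^2) ≤ ENNReal.ofReal (‖p.1 - p.2‖^2)} := by
      rintro ⟨x, y⟩ hx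
      simp only [mem_preimage] at hx
      by_cases hd2 : ‖x - y‖ < δ
      · left
        simp only [mem_preimage, mem_setOf_eq]
        calc Metric.infDist y F ≤ dist y x := Metric.infDist_le_dist_of_mem hx
          _ ≤ δ := by rw [dist_eq_norm, norm_sub_rev]; exact hd2.le
      · right
        push_neg at hd2
        simp only [mem_setOf_eq]
        exact ENNReal.ofReal_le_ofReal (by nlinarith [norm_nonneg (x - y)])
    have hbad : γ {p : Rd d × Rd d | ENNReal.ofReal (δ^2)
        ≤ ENNReal.ofReal (‖p.1 - p.2‖^2)} ≤ η := by
      have hm : Measurable fun p : Rd d × Rd d => ENNReal.ofReal (‖p.1 - p.2‖^2) :=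
        ((continuous_fst.sub continuous_snd).norm.pow 2).measurable.ennreal_ofReal
      have := mul_meas_ge_le_lintegral (μ := γ) hm (ENNReal.ofReal (δ^2))
      have h2 : ENNReal.ofReal (δ^2) * γ {p : Rd d × Rd d | ENNReal.ofReal (δ^2)
          ≤ ENNReal.ofReal (‖p.1 - p.2‖^2)} < ENNReal.ofReal (δ^2) * η :=
        lt_of_le_of_lt this hγcost
      have hne : ENNReal.ofReal (δ^2) ≠ 0 := by
        simp [ENNReal.ofReal_eq_zero]; positivity
      exact le_of_lt ((ENNReal.mul_lt_mul_iff_right hne (by simp)).1 h2)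
    calc μ F = γ (Prod.fst ⁻¹' F) := by
          rw [← hγc.1, Measure.map_apply measurable_fst hFm]
      _ ≤ γ (Prod.snd ⁻¹' {y | Metric.infDist y F ≤ δ}) +
          γ {p : Rd d × Rd d | ENNReal.ofReal (δ^2) ≤ ENNReal.ofReal (‖p.1 - p.2‖^2)} :=
          le_trans (measure_mono hsplit) (measure_union_le _ _)
      _ ≤ ν {y | Metric.infDist y F ≤ δ} + η := by
          refine add_le_add ?_ hbad
          rw [← hγc.2, Measure.map_apply measurable_snd hνm]
      _ = ν {y | Metric.infDist y F ≤ 1/(n+1)} + η := by rw [hδ]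
  -- pass to the limit
  have hinter : (⋂ n : ℕ, {y : Rd d | Metric.infDist y F ≤ 1/(n+1)}) = F := by
    ext y
    simp only [mem_iInter, mem_setOf_eq]
    constructor
    · intro hy
      have h0 : Metric.infDist y F ≤ 0 := by
        refine le_of_forall_pos_le_add fun ε hε => ?_
        obtain ⟨n, hn⟩ := exists_nat_one_div_lt hε
        calc Metric.infDist y F ≤ 1/(n+1) := hy n
          _ ≤ 0 + ε := by
            have : (1:ℝ)/(n+1) < ε := by exact_mod_cast hn
            linarith
      rw [← hF.closure_eq]
      exact (Metric.mem_closure_iff_infDist_zero hFne).2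
        (le_antisymm h0 Metric.infDist_nonneg)
    · intro hy n
      rw [Metric.infDist_zero_of_mem hy]
      positivity
  have hanti : Antitone fun n : ℕ => {y : Rd d | Metric.infDist y F ≤ 1/(n+1)} := by
    intro a b hab y hy
    simp only [mem_setOf_eq] at *
    refine le_trans hy ?_
    gcongr
  have htend := tendsto_measure_iInter_atTop (μ := ν)
    (fun n => ((isClosed_le (Metric.continuous_infDist_pt F)
      continuous_const).measurableSet).nullMeasurableSet)
    hanti ⟨0, measure_ne_top _ _⟩
  rw [hinter] at htend
  exact ge_of_tendsto' htend hstep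

lemma eq_of_W2sqE_zero {μ ν : Measure (Rd d)} [IsProbabilityMeasure μ]
    [IsProbabilityMeasure ν] (h : W2sqE μ ν = 0) : μ = ν := by
  have h' : W2sqE ν μ = 0 := by rw [W2sqE_comm]; exact h
  refine ext_of_generate_finite {s : Set (Rd d) | IsClosed s} ?_ ?_ ?_ (by simp)
  · rw [BorelSpace.measurable_eq (α := Rd d), borel_eq_generateFrom_isClosed]
  · exact isPiSystem_isClosed
  · intro s hs
    exact le_antisymm (measure_le_of_closed h hs) (measure_le_of_closed h' hs)

lemma vec_identity (α β : ℝ) (hβ : β = α - 1) (x m a : Rd d) :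
    ‖x - ((1-α)•a + α•m)‖^2 = α*‖x - m‖^2 - β*‖x - a‖^2 + α*β*‖m - a‖^2 := by
  have e : x - ((1-α)•a + α•m) = (x - a) - α•(m - a) := by module
  have e2 : x - m = (x - a) - (m - a) := by module
  rw [e, e2]
  have h1 : ‖(x-a) - α•(m-a)‖^2
      = ‖x-a‖^2 - 2*(α*⟪x-a, m-a⟫) + α^2*‖m-a‖^2 := by
    rw [norm_sub_sq_real, real_inner_smul_right, norm_smul, mul_pow, Real.norm_eq_abs, sq_abs]
  have h2 : ‖(x-a) - (m-a)‖^2 = ‖x-a‖^2 - 2*⟪x-a, m-a⟫ + ‖m-a‖^2 := norm_sub_sq_real _ _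
  rw [h1, h2, hβ]
  ring

lemma W2sq_comm (μ ν : Measure (Rd d)) : W2sq μ ν = W2sq ν μ := by
  rw [W2sq, W2sq, W2sqE_comm]

lemma lower_bound {α β : ℝ} (hα : 1 < α) (hβ : β = α - 1)
    {μ₀ : Measure (Rd d)} (h0 : MemP2 μ₀) {g : Rd d → Rd d} (hgm : Measurable g)
    (h1g : MemP2 (μ₀.map g)) (hω : MemP2 (μ₀.map (fun x => (1-α)•x + α•g x)))
    {ρ : Measure (Rd d)} (hρ : MemP2 ρ) :
    W2sq ρ (μ₀.map (fun x => (1-α)•x + α•g x))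
        - α*β*(∫ x, ‖x - g x‖^2 ∂μ₀)
      ≤ α * W2sq ρ (μ₀.map g) - β * W2sq ρ μ₀ := by
  set T : Rd d → Rd d := fun x => (1-α)•x + α•g x with hT
  have hTm : Measurable T := by
    exact (measurable_id.const_smul (1-α)).add ((hgm.const_smul α))
  set D : ℝ := ∫ x, ‖x - g x‖^2 ∂μ₀ with hD
  haveI hP0 : IsProbabilityMeasure μ₀ := h0.1
  haveI hPρ : IsProbabilityMeasure ρ := hρ.1
  haveI hP1 : IsProbabilityMeasure (μ₀.map g) := h1g.1
  haveI hPω : IsProbabilityMeasure (μ₀.map T) := hω.1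
  have hβ0 : 0 < β := by rw [hβ]; linarith
  have hα0 : 0 < α := by linarith
  -- reduce to ε-approximation
  rw [sub_le_iff_le_add]
  refine le_of_forall_pos_le_add fun ε hε => ?_
  -- pick a near-optimal coupling of (ρ, μ₁)
  have hfin : W2sqE ρ (μ₀.map g) ≠ ⊤ := (W2sqE_lt_top hρ h1g).ne
  have hlt : W2sqE ρ (μ₀.map g) < W2sqE ρ (μ₀.map g) + ENNReal.ofReal (ε/α) := by
    refine ENNReal.lt_add_right hfin ?_
    simp [ENNReal.ofReal_eq_zero]
    positivity
  obtain ⟨γ, hγc, hγcost⟩ : ∃ γ, IsCoupling γ ρ (μ₀.map g) ∧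
      transportCost γ < W2sqE ρ (μ₀.map g) + ENNReal.ofReal (ε/α) := by
    conv_lhs at hlt => rw [W2sqE]
    obtain ⟨γ, hγ⟩ := iInf_lt_iff.1 hlt
    obtain ⟨hc, hlt'⟩ := iInf_lt_iff.1 hγ
    exact ⟨γ, hc, hlt'⟩
  have hγreal : ∫ p, ‖p.1 - p.2‖^2 ∂γ ≤ W2sq ρ (μ₀.map g) + ε/α := by
    rw [transportCost_eq_ofReal hγc hρ h1g] at hγcost
    have h2 := ENNReal.toReal_mono (by
        refine ENNReal.add_ne_top.2 ⟨hfin, ENNReal.ofReal_ne_top⟩) hγcost.le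
    rw [ENNReal.toReal_ofReal (integral_nonneg fun p => by positivity),
      ENNReal.toReal_add hfin ENNReal.ofReal_ne_top,
      ENNReal.toReal_ofReal (by positivity)] at h2
    exact h2
  -- glue
  obtain ⟨τ, hτc, hτmap⟩ := glue ρ μ₀ g hgm γ hγc
  haveI : IsProbabilityMeasure τ := coupling_prob hτc
  haveI : IsProbabilityMeasure γ := coupling_prob hγc
  -- integrability over τ
  have hIg : Integrable (fun x => ‖g x‖^2) μ₀ := integrable_normsq_comp hgm h1g
  have hIx : Integrable (fun x : Rd d => ‖x‖^2) μ₀ := memP2_integrable_normsq h0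
  have ic2 : Integrable (fun p : Rd d × Rd d => ‖p.1 - p.2‖^2) τ :=
    coupling_int_cost hτc hρ h0
  have hc4int : Integrable (fun a : Rd d => ‖g a - a‖^2) μ₀ := by
    refine Integrable.mono' ((hIg.const_mul 2).add (hIx.const_mul 2))
      ((hgm.sub measurable_id).norm.pow_const 2).aestronglyMeasurable
      (Eventually.of_forall fun a => ?_)
    simp only [Pi.add_apply]
    rw [Real.norm_eq_abs, abs_of_nonneg (by positivity)]
    have h1 : ‖g a - a‖ ≤ ‖g a‖ + ‖a‖ := norm_sub_le _ _
    have h3 := mul_le_mul h1 h1 (norm_nonneg _) (by positivity : (0:ℝ) ≤ ‖g a‖ + ‖a‖)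
    nlinarith [sq_nonneg (‖g a‖ - ‖a‖)]
  have ic4 : Integrable (fun p : Rd d × Rd d => ‖g p.2 - p.2‖^2) τ :=
    integrable_snd hτc ((hgm.sub measurable_id).norm.pow_const 2).aestronglyMeasurable hc4int
  have hγint : Integrable (fun p : Rd d × Rd d => ‖p.1 - p.2‖^2) γ :=
    coupling_int_cost hγc hρ h1g
  have hmapm : Measurable fun p : Rd d × Rd d => (p.1, g p.2) :=
    measurable_fst.prodMk (hgm.comp measurable_snd)
  have ic1 : Integrable (fun p : Rd d × Rd d => ‖p.1 - g p.2‖^2) τ := by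
    have := (integrable_map_measure
      ((continuous_fst.sub continuous_snd).norm.pow 2).aestronglyMeasurable
      hmapm.aemeasurable).1 (hτmap ▸ hγint)
    exact this
  have ic3 : Integrable (fun p : Rd d × Rd d => ‖p.1 - T p.2‖^2) τ := by
    refine Integrable.congr (((ic1.const_mul α).sub (ic2.const_mul β)).add
      (ic4.const_mul (α*β))) (Eventually.of_forall fun p => ?_)
    simp only [Pi.add_apply, Pi.sub_apply]
    rw [← vec_identity α β hβ p.1 (g p.2) p.2]
  -- cost identities
  have e1 : ∫ p, ‖p.1 - p.2‖^2 ∂γ = ∫ p : Rd d × Rd d, ‖p.1 - g p.2‖^2 ∂τ := by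
    rw [← hτmap, integral_map hmapm.aemeasurable
      (f := fun p : Rd d × Rd d => ‖p.1 - p.2‖^2)
      ((continuous_fst.sub continuous_snd).norm.pow 2).aestronglyMeasurable]
  have e4 : ∫ p : Rd d × Rd d, ‖g p.2 - p.2‖^2 ∂τ = D := by
    rw [← integral_snd hτc (f := fun a : Rd d => ‖g a - a‖^2)
      ((hgm.sub measurable_id).norm.pow_const 2).aestronglyMeasurable]
    rw [hD]
    refine integral_congr_ae (Eventually.of_forall fun a => ?_)
    show ‖g a - a‖^2 = ‖a - g a‖^2
    rw [norm_sub_rev]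
  -- the pushforward coupling with ω
  have hmapT : Measurable fun p : Rd d × Rd d => (p.1, T p.2) :=
    measurable_fst.prodMk (hTm.comp measurable_snd)
  have hτT : IsCoupling (τ.map (fun p => (p.1, T p.2))) ρ (μ₀.map T) := by
    constructor
    · rw [Measure.map_map measurable_fst hmapT]
      have e : (Prod.fst ∘ fun p : Rd d × Rd d => (p.1, T p.2)) = Prod.fst := rfl
      rw [e, hτc.1]
    · rw [Measure.map_map measurable_snd hmapT]
      have e : (Prod.snd ∘ fun p : Rd d × Rd d => (p.1, T p.2)) = T ∘ Prod.snd := rfl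
      rw [e, ← Measure.map_map hTm measurable_snd, hτc.2]
  have hWω : W2sq ρ (μ₀.map T) ≤ ∫ p : Rd d × Rd d, ‖p.1 - T p.2‖^2 ∂τ := by
    refine le_trans (W2sq_le_cost hτT hρ hω) (le_of_eq ?_)
    rw [integral_map hmapT.aemeasurable
      (f := fun p : Rd d × Rd d => ‖p.1 - p.2‖^2)
      ((continuous_fst.sub continuous_snd).norm.pow 2).aestronglyMeasurable]
  -- expand ∫ c3
  have hint3 : ∫ p : Rd d × Rd d, ‖p.1 - T p.2‖^2 ∂τ
      = α * (∫ p : Rd d × Rd d, ‖p.1 - g p.2‖^2 ∂τ)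
        - β * (∫ p : Rd d × Rd d, ‖p.1 - p.2‖^2 ∂τ) + α*β*D := by
    have ee : ∫ p : Rd d × Rd d, ‖p.1 - T p.2‖^2 ∂τ
        = ∫ p : Rd d × Rd d, (α * ‖p.1 - g p.2‖^2 - β * ‖p.1 - p.2‖^2
            + α*β*‖g p.2 - p.2‖^2) ∂τ := by
      refine integral_congr_ae (Eventually.of_forall fun p => ?_)
      exact vec_identity α β hβ p.1 (g p.2) p.2
    have iA : Integrable (fun p : Rd d × Rd d =>
        α * ‖p.1 - g p.2‖^2 - β * ‖p.1 - p.2‖^2) τ := (ic1.const_mul α).sub (ic2.const_mul β)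
    rw [ee, integral_add iA (ic4.const_mul (α*β)),
      integral_sub (ic1.const_mul α) (ic2.const_mul β), integral_const_mul,
      integral_const_mul, integral_const_mul, e4]
  have hW0 : W2sq ρ μ₀ ≤ ∫ p : Rd d × Rd d, ‖p.1 - p.2‖^2 ∂τ := W2sq_le_cost hτc hρ h0
  have hγτ : ∫ p : Rd d × Rd d, ‖p.1 - g p.2‖^2 ∂τ ≤ W2sq ρ (μ₀.map g) + ε/α := by
    rw [← e1]; exact hγreal
  calc W2sq ρ (μ₀.map T) ≤ ∫ p : Rd d × Rd d, ‖p.1 - T p.2‖^2 ∂τ := hWω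
    _ = α * (∫ p : Rd d × Rd d, ‖p.1 - g p.2‖^2 ∂τ)
        - β * (∫ p : Rd d × Rd d, ‖p.1 - p.2‖^2 ∂τ) + α*β*D := hint3
    _ ≤ α * (W2sq ρ (μ₀.map g) + ε/α) - β * W2sq ρ μ₀ + α*β*D := by
        have t1 : α * (∫ p : Rd d × Rd d, ‖p.1 - g p.2‖^2 ∂τ)
            ≤ α * (W2sq ρ (μ₀.map g) + ε/α) := by
          exact mul_le_mul_of_nonneg_left hγτ hα0.le
        have t2 : β * W2sq ρ μ₀ ≤ β * (∫ p : Rd d × Rd d, ‖p.1 - p.2‖^2 ∂τ) :=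
          mul_le_mul_of_nonneg_left hW0 hβ0.le
        linarith
    _ = α * W2sq ρ (μ₀.map g) - β * W2sq ρ μ₀ + α*β*D + ε := by
        field_simp
        ring

lemma subgrad {d : ℕ} {u : Rd d → ℝ} (hu : ConvexOn ℝ univ u) {x G : Rd d}
    (hG : HasGradientAt u G x) (y : Rd d) : u x + ⟪G, y - x⟫ ≤ u y := by
  have hd : HasDerivAt (fun t : ℝ => u (x + t • (y - x))) ⟪G, y - x⟫ 0 := by
    have h1 : HasFDerivAt u ((InnerProductSpace.toDual ℝ (Rd d)) G) x :=
      hasGradientAt_iff_hasFDerivAt.1 hG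
    have h2 : HasDerivAt (fun t : ℝ => x + t • (y - x)) (y - x) 0 := by
      simpa using ((hasDerivAt_id (0:ℝ)).smul_const (y - x)).const_add x
    have h1' : HasFDerivAt u ((InnerProductSpace.toDual ℝ (Rd d)) G) (x + (0:ℝ) • (y - x)) := by
      simpa using h1
    have := h1'.comp_hasDerivAt 0 h2
    simp [InnerProductSpace.toDual_apply_apply] at this; exact this
  -- slope bound
  have key : ∀ t : ℝ, t ∈ Ioc (0:ℝ) 1 → (u (x + t • (y - x)) - u x) / t ≤ u y - u x := by
    intro t ht
    obtain ⟨ht1, ht2⟩ := ht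
    have hc := hu.2 (mem_univ x) (mem_univ y) (show (0:ℝ) ≤ 1 - t by linarith) ht1.le
      (show (1 - t) + t = 1 by ring)
    have hx : (1 - t) • x + t • y = x + t • (y - x) := by
      simp [smul_sub, sub_smul]; abel
    rw [hx] at hc
    simp only [smul_eq_mul] at hc
    rw [div_le_iff₀ ht1]
    nlinarith [hc]
  have htend : Tendsto (fun t : ℝ => (u (x + t • (y - x)) - u x) / t) (𝓝[>] 0)
      (𝓝 ⟪G, y - x⟫) := by
    have := hd.hasDerivWithinAt (s := Ioi 0)
    have h := hasDerivWithinAt_iff_tendsto_slope.1 this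
    have : Tendsto (slope (fun t : ℝ => u (x + t • (y - x))) 0) (𝓝[>] 0) (𝓝 ⟪G, y - x⟫) :=
      h.mono_left (nhdsWithin_mono _ (fun t ht => ⟨ht, ne_of_gt ht⟩))
    refine this.congr' ?_
    filter_upwards [self_mem_nhdsWithin] with t ht
    simp [slope_def_field, div_eq_inv_mul]
  have hle : ⟪G, y - x⟫ ≤ u y - u x := by
    refine le_of_tendsto htend ?_
    filter_upwards [Ioc_mem_nhdsGT one_pos] with t ht using key t ht
  linarith


lemma gradq {d : ℕ} (x : Rd d) : HasGradientAt (fun x : Rd d => ‖x‖^2 / 2) x x := by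
  rw [hasGradientAt_iff_hasFDerivAt]
  have h : HasFDerivAt (fun y : Rd d => ⟪y, y⟫ / 2)
      ((InnerProductSpace.toDual ℝ (Rd d)) x) x := by
    have h1 := (hasFDerivAt_id x).inner ℝ (hasFDerivAt_id x)
    have h2 := h1.const_smul (𝕜 := ℝ) (R := ℝ) ((2:ℝ)⁻¹)
    have h3 : (fun y : Rd d => ⟪y, y⟫ / 2) = fun y : Rd d => (2:ℝ)⁻¹ • ⟪y, y⟫ := by
      ext y; simp [smul_eq_mul]; ring
    rw [h3]
    refine h2.congr_fderiv ?_
    ext v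
    simp [InnerProductSpace.toDual_apply_apply, real_inner_comm, smul_eq_mul, mul_comm]
    ring
  refine h.congr_of_eventuallyEq ?_
  filter_upwards with y
  rw [real_inner_self_eq_norm_sq]

lemma gradpsi {d : ℕ} (α β : ℝ) {u : Rd d → ℝ} {x G : Rd d} (hG : HasGradientAt u G x) :
    HasGradientAt (fun x : Rd d => α * u x - β * (‖x‖^2 / 2)) (α • G - β • x) x := by
  rw [hasGradientAt_iff_hasFDerivAt] at *
  have hq := gradq x
  rw [hasGradientAt_iff_hasFDerivAt] at hq
  have h1 := (hG.const_mul α).sub (hq.const_mul β)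
  refine h1.congr_fderiv ?_
  ext v
  simp [InnerProductSpace.toDual_apply_apply, inner_sub_left, real_inner_smul_left]


lemma convex_ae_diff {d : ℕ} {u : Rd d → ℝ} (hu : ConvexOn ℝ univ u) :
    ∀ᵐ x ∂(volume : Measure (Rd d)), DifferentiableAt ℝ u x := by
  have hll : LocallyLipschitz u := by
    rw [← locallyLipschitzOn_univ]
    exact hu.locallyLipschitzOn isOpen_univ
  -- for each x, an open nbhd on which u is Lipschitz
  have hnb : ∀ x : Rd d, ∃ s : Set (Rd d), IsOpen s ∧ x ∈ s ∧ ∃ K, LipschitzOnWith K u s := by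
    intro x
    obtain ⟨K, t, ht, hK⟩ := hll x
    exact ⟨interior t, isOpen_interior, mem_interior_iff_mem_nhds.2 ht, K,
      hK.mono interior_subset⟩
  choose s hso hsx K hsK using hnb
  obtain ⟨T, hTc, hTcover⟩ := TopologicalSpace.countable_cover_nhds
    (fun x => (hso x).mem_nhds (hsx x))
  have hae : ∀ x₀ ∈ T, ∀ᵐ x ∂(volume : Measure (Rd d)),
      x ∈ s x₀ → DifferentiableAt ℝ u x := by
    intro x₀ _
    filter_upwards [(hsK x₀).ae_differentiableWithinAt_of_mem] with x hx hxs
    exact (hx hxs).differentiableAt ((hso x₀).mem_nhds hxs)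
  rw [← ae_ball_iff hTc] at hae
  filter_upwards [hae] with x hx
  have : x ∈ ⋃ x₀ ∈ T, s x₀ := hTcover ▸ mem_univ x
  obtain ⟨x₀, hx₀T, hxs⟩ := mem_iUnion₂.1 this
  exact hx x₀ hx₀T hxs

end Helpers

/-- when the geodesic from `μ₀` to `μ₁` extends up to time `α`, the
extrapolated measure `ω(α)` is the unique minimizer of the metric-extrapolation
functional, attaining the lower bound `−αβ W₂²(μ₀,μ₁)`. -/
theorem stmt_10 {d : ℕ} (α β : ℝ) (hα : 1 < α) (hβ : β = α - 1)
    (μ₀ μ₁ : Measure (Rd d)) (hac : μ₀ ≪ volume) (h0 : MemP2 μ₀) (h1 : MemP2 μ₁)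
    (u : Rd d → ℝ) (hu : ConvexOn ℝ univ u)
    (hpush : μ₁ = μ₀.map (gradient u))
    (hconv : ConvexOn ℝ univ fun x => α * u x - β * (‖x‖^2 / 2)) :
    (α * W2sq (μ₀.map fun x => (1 - α) • x + α • gradient u x) μ₁
        - β * W2sq (μ₀.map fun x => (1 - α) • x + α • gradient u x) μ₀
      = -(α * β * W2sq μ₀ μ₁)) ∧
    (∀ ρ, MemP2 ρ →
      α * W2sq ρ μ₁ - β * W2sq ρ μ₀ = -(α * β * W2sq μ₀ μ₁) →
      ρ = μ₀.map fun x => (1 - α) • x + α • gradient u x) ∧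
    W2sq μ₀ (μ₀.map fun x => (1 - α) • x + α • gradient u x) = α^2 * W2sq μ₀ μ₁ ∧
    W2sq μ₁ (μ₀.map fun x => (1 - α) • x + α • gradient u x) = β^2 * W2sq μ₀ μ₁ := by
  haveI hP0 : IsProbabilityMeasure μ₀ := h0.1
  haveI hP1 : IsProbabilityMeasure μ₁ := h1.1
  have hβ0 : 0 < β := by rw [hβ]; linarith
  have hα0 : 0 < α := by linarith
  have hgae : AEMeasurable (gradient u) μ₀ := by
    by_contra hc
    rw [Measure.map_of_not_aemeasurable hc] at hpush
    exact (IsProbabilityMeasure.ne_zero μ₁) hpush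
  set g : Rd d → Rd d := hgae.mk (gradient u) with hgdef
  have hgm : Measurable g := hgae.measurable_mk
  have hgg : gradient u =ᵐ[μ₀] g := hgae.ae_eq_mk
  have hμ₁g : μ₁ = μ₀.map g := by rw [hpush]; exact Measure.map_congr hgg
  set T : Rd d → Rd d := fun x => (1-α)•x + α•g x with hTdef
  have hTm : Measurable T := (measurable_id.const_smul (1-α)).add (hgm.const_smul α)
  have hTae : (fun x => (1 - α) • x + α • gradient u x) =ᵐ[μ₀] T := by
    filter_upwards [hgg] with x hx
    rw [hTdef]
    simp only [hx]
  have hωeq : (μ₀.map fun x => (1 - α) • x + α • gradient u x) = μ₀.map T :=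
    Measure.map_congr hTae
  have hdiff : ∀ᵐ x ∂μ₀, DifferentiableAt ℝ u x :=
    (Helpers.convex_ae_diff hu).filter_mono hac.ae_le
  have hsub_u : ∀ᵐ x ∂μ₀, ∀ y, u x + ⟪g x, y - x⟫ ≤ u y := by
    filter_upwards [hdiff, hgg] with x hx hgx
    intro y
    have hgrad : HasGradientAt u (g x) x := hgx ▸ hx.hasGradientAt
    exact Helpers.subgrad hu hgrad y
  have hucont : Continuous u := by
    rw [← continuousOn_univ]
    exact hu.continuousOn isOpen_univ
  set D : ℝ := ∫ x, ‖x - g x‖^2 ∂μ₀ with hDdef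
  have hDnn : 0 ≤ D := integral_nonneg fun x => by positivity
  have h1g : MemP2 (μ₀.map g) := hμ₁g ▸ h1
  have F1 : W2sqE μ₀ (μ₀.map g) = ENNReal.ofReal D :=
    Helpers.fenchel_opt h0 hgm h1g hucont hsub_u
  have hWD : W2sq μ₀ μ₁ = D := by rw [hμ₁g, W2sq, F1, ENNReal.toReal_ofReal hDnn]
  have hWD' : W2sq μ₀ (μ₀.map g) = D := by rw [← hμ₁g]; exact hWD
  have hsub_ψ : ∀ᵐ x ∂μ₀, ∀ y,
      (α * u x - β * (‖x‖^2/2)) + ⟪T x, y - x⟫ ≤ α * u y - β * (‖y‖^2/2) := by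
    filter_upwards [hdiff, hgg] with x hx hgx
    intro y
    have hgrad : HasGradientAt u (g x) x := hgx ▸ hx.hasGradientAt
    have h2 := Helpers.gradpsi α β hgrad
    have hTx : α • g x - β • x = T x := by rw [hTdef, hβ]; module
    rw [hTx] at h2
    exact Helpers.subgrad hconv h2 y
  have hψcont : Continuous fun x : Rd d => α * u x - β * (‖x‖^2/2) :=
    (continuous_const.mul hucont).sub
      (continuous_const.mul ((continuous_norm.pow 2).div_const 2))
  have hIg : Integrable (fun x => ‖g x‖^2) μ₀ := Helpers.integrable_normsq_comp hgm h1g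
  have hIx : Integrable (fun x : Rd d => ‖x‖^2) μ₀ := Helpers.memP2_integrable_normsq h0
  have hITsq : Integrable (fun x => ‖T x‖^2) μ₀ := by
    refine Integrable.mono' ((hIx.const_mul (2*(1-α)^2)).add (hIg.const_mul (2*α^2)))
      (hTm.norm.pow_const 2).aestronglyMeasurable (Eventually.of_forall fun x => ?_)
    simp only [Pi.add_apply]
    rw [Real.norm_eq_abs, abs_of_nonneg (by positivity)]
    have h1' : ‖T x‖ ≤ |1 - α| * ‖x‖ + |α| * ‖g x‖ := by
      refine le_trans (norm_add_le _ _) ?_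
      rw [norm_smul, norm_smul, Real.norm_eq_abs, Real.norm_eq_abs]
    have ha : |1 - α|^2 = (1-α)^2 := sq_abs _
    have hb : |α|^2 = α^2 := sq_abs _
    have h3 := mul_le_mul h1' h1' (norm_nonneg _)
      (by positivity : (0:ℝ) ≤ |1 - α| * ‖x‖ + |α| * ‖g x‖)
    nlinarith [sq_nonneg (|1 - α| * ‖x‖ - |α| * ‖g x‖)]
  have hωP2 : MemP2 (μ₀.map T) := by
    refine ⟨Measure.isProbabilityMeasure_map hTm.aemeasurable, ?_⟩
    rw [lintegral_map (f := fun x : Rd d => ENNReal.ofReal (‖x‖^2))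
        ((continuous_norm.pow 2).measurable.ennreal_ofReal) hTm,
      ← ofReal_integral_eq_lintegral_ofReal hITsq
        (Eventually.of_forall fun x => by positivity)]
    exact ENNReal.ofReal_lt_top
  have hxT : ∀ x, ‖x - T x‖^2 = α^2 * ‖x - g x‖^2 := by
    intro x
    have e : x - T x = α • (x - g x) := by rw [hTdef]; module
    rw [e, norm_smul, mul_pow, Real.norm_eq_abs, sq_abs]
  have F2 : W2sqE μ₀ (μ₀.map T) = ENNReal.ofReal (α^2 * D) := by
    rw [Helpers.fenchel_opt h0 hTm hωP2 hψcont hsub_ψ]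
    congr 1
    rw [hDdef, ← integral_const_mul]
    exact integral_congr_ae (Eventually.of_forall fun x => hxT x)
  have hW0ω : W2sq μ₀ (μ₀.map T) = α^2 * D := by
    rw [W2sq, F2, ENNReal.toReal_ofReal (by positivity)]
  -- upper bound for W2sq μ₁ ω
  have hκm : Measurable fun x : Rd d => (g x, T x) := hgm.prodMk hTm
  have hκc : IsCoupling (μ₀.map fun x => (g x, T x)) (μ₀.map g) (μ₀.map T) := by
    constructor
    · rw [Measure.map_map measurable_fst hκm]; rfl
    · rw [Measure.map_map measurable_snd hκm]; rfl
  have hκcost : ∫ p, ‖p.1 - p.2‖^2 ∂(μ₀.map fun x => (g x, T x)) = β^2 * D := by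
    rw [integral_map hκm.aemeasurable
      (f := fun p : Rd d × Rd d => ‖p.1 - p.2‖^2)
      ((continuous_fst.sub continuous_snd).norm.pow 2).aestronglyMeasurable,
      hDdef, ← integral_const_mul]
    refine integral_congr_ae (Eventually.of_forall fun x => ?_)
    show ‖g x - T x‖^2 = β^2 * ‖x - g x‖^2
    have e : g x - T x = β • (x - g x) := by rw [hTdef, hβ]; module
    rw [e, norm_smul, mul_pow, Real.norm_eq_abs, sq_abs]
  have hup : W2sq (μ₀.map g) (μ₀.map T) ≤ β^2 * D := by
    rw [← hκcost]
    exact Helpers.W2sq_le_cost hκc h1g hωP2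
  -- lower bound machinery
  have hLB : ∀ {ρ : Measure (Rd d)}, MemP2 ρ →
      W2sq ρ (μ₀.map T) - α*β*D ≤ α * W2sq ρ (μ₀.map g) - β * W2sq ρ μ₀ := by
    intro ρ hρ
    exact Helpers.lower_bound hα hβ h0 hgm h1g hωP2 hρ
  have hself : W2sq (μ₀.map T) (μ₀.map T) = 0 := by
    haveI := hωP2.1
    rw [W2sq, Helpers.W2sqE_self]
    simp
  have hωμ₀ : W2sq (μ₀.map T) μ₀ = α^2*D := by rw [Helpers.W2sq_comm]; exact hW0ω
  have hlow := hLB hωP2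
  rw [hself, hωμ₀] at hlow
  have hωμ₁ : W2sq (μ₀.map g) (μ₀.map T) = β^2 * D := by
    refine le_antisymm hup ?_
    rw [Helpers.W2sq_comm]
    have e : α * (β^2 * D) = β*(α^2*D) - α*β*D := by rw [hβ]; ring
    have h1 : α * (β^2*D) ≤ α * W2sq (μ₀.map T) (μ₀.map g) := by
      rw [e]; linarith [hlow]
    exact le_of_mul_le_mul_left h1 hα0
  refine ⟨?_, ?_, ?_, ?_⟩
  · rw [hωeq, hμ₁g, Helpers.W2sq_comm (μ₀.map T) (μ₀.map g), hωμ₁, hωμ₀, hWD', hβ]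
    ring
  · intro ρ hρ heq
    rw [hμ₁g, hWD'] at heq
    have hlow2 := hLB hρ
    have hzero : W2sq ρ (μ₀.map T) = 0 :=
      le_antisymm (by linarith) (Helpers.W2sq_nonneg _ _)
    have hEzero : W2sqE ρ (μ₀.map T) = 0 := by
      have hfin := (Helpers.W2sqE_lt_top hρ hωP2).ne
      rcases (ENNReal.toReal_eq_zero_iff _).1 hzero with h | h
      · exact h
      · exact absurd h hfin
    haveI := hρ.1
    haveI := hωP2.1
    rw [hωeq]
    exact Helpers.eq_of_W2sqE_zero hEzero
  · rw [hωeq, hW0ω, hWD]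
  · rw [hωeq, hμ₁g, hωμ₁, hWD']
end
end

section
/- Let Ω ⊂ ℝ^d be convex compact, 𝓔 : 𝓟(Ω) → ℝ lower semi-continuous and λ-convex along generalized geodesics with λ ∈ ℝ₊, and let (ρ_n) be EVBDF2 iterates with time step τ, β = α−1, using the metric extrapolation ρ^α_{n−1} (the unique minimizer of ρ ↦ αW₂²(ρ,ρ_{n−1}) − βW₂²(ρ,ρ_{n−2})). Then at each step n and for every ν ∈ 𝓟(Ω): (1/(2(1−β)τ) + λ/2) W₂²(ρ_n, ν) − α W₂²(ν, ρ_{n−1})/(2(1−β)τ) + β W₂²(ν, ρ_{n−2})/(2(1−β)τ) ≤ 𝓔(ν) − 𝓔(ρ_n) + αβ W₂²(ρ_{n−1}, ρ_{n−2})/(2(1−β)τ) − W₂²(ρ_n, ρ^α_{n−1})/(2(1−β)τ). -/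
open MeasureTheory Set
open scoped ENNReal RealInnerProductSpace

noncomputable section

/-- `λ`-convexity along generalized geodesics on `𝓟(Ω)`: for every base point `ν₀` and
every glued 3-plan `γ` whose (0,1)- and (0,2)-marginals are optimal plans, the usual
`λ`-convexity inequality holds along the induced curve. -/
def LambdaConvexGG {d : ℕ} (Ω : Set (Rd d)) (𝓔 : Measure (Rd d) → ℝ) (lam : ℝ) : Prop :=
  ∀ ν₀ ν₁ ν₂ : Measure (Rd d), ProbOn Ω ν₀ → ProbOn Ω ν₁ → ProbOn Ω ν₂ →
    ∀ γ : Measure (Rd d × Rd d × Rd d),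
      IsOptimalPlan (γ.map fun p => (p.1, p.2.1)) ν₀ ν₁ →
      IsOptimalPlan (γ.map fun p => (p.1, p.2.2)) ν₀ ν₂ →
      ∀ t ∈ Icc (0:ℝ) 1,
        𝓔 (γ.map fun p => (1 - t) • p.2.1 + t • p.2.2)
          ≤ (1 - t) * 𝓔 ν₁ + t * 𝓔 ν₂
            - lam * t * (1 - t) / 2 * (∫ p, ‖p.2.1 - p.2.2‖ ^ 2 ∂γ)

section Aux

open ProbabilityTheory

variable {d : ℕ}

lemma measurable_cost : Measurable fun p : Rd d × Rd d => ENNReal.ofReal (‖p.1 - p.2‖ ^ 2) :=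
  ((measurable_fst.sub measurable_snd).norm.pow_const 2).ennreal_ofReal

lemma measurable_interp (t : ℝ) : Measurable fun q : Rd d × Rd d => (1 - t) • q.1 + t • q.2 :=
  ((continuous_fst.const_smul (1 - t)).add (continuous_snd.const_smul t)).measurable

lemma isCoupling_map_pair {A : Type*} [MeasurableSpace A] (Γ : Measure A)
    {u v : A → Rd d} (hu : Measurable u) (hv : Measurable v) :
    IsCoupling (Γ.map fun a => (u a, v a)) (Γ.map u) (Γ.map v) := by
  constructor
  · rw [Measure.map_map measurable_fst (hu.prodMk hv)]; rfl
  · rw [Measure.map_map measurable_snd (hu.prodMk hv)]; rfl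

lemma transportCost_map_pair {A : Type*} [MeasurableSpace A] (Γ : Measure A)
    {u v : A → Rd d} (hu : Measurable u) (hv : Measurable v) :
    transportCost (Γ.map fun a => (u a, v a))
      = ∫⁻ a, ENNReal.ofReal (‖u a - v a‖ ^ 2) ∂Γ := by
  rw [transportCost, lintegral_map measurable_cost (hu.prodMk hv)]

lemma coupling_isProbabilityMeasure {μ ν : Measure (Rd d)} {γ : Measure (Rd d × Rd d)}
    [IsProbabilityMeasure μ] (h : IsCoupling γ μ ν) : IsProbabilityMeasure γ := by
  constructor
  rw [show (univ : Set (Rd d × Rd d)) = Prod.fst ⁻¹' univ from preimage_univ.symm,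
    ← Measure.map_apply measurable_fst MeasurableSet.univ, h.1, measure_univ]

lemma W2sqE_le_cost {μ ν : Measure (Rd d)} {γ : Measure (Rd d × Rd d)}
    (h : IsCoupling γ μ ν) : W2sqE μ ν ≤ transportCost γ :=
  iInf₂_le γ h

lemma isCoupling_prod (μ ν : Measure (Rd d)) [IsProbabilityMeasure μ] [IsProbabilityMeasure ν] :
    IsCoupling (μ.prod ν) μ ν := by
  constructor
  · show (μ.prod ν).fst = μ; exact Measure.fst_prod
  · show (μ.prod ν).snd = ν; exact Measure.snd_prod

lemma ae_mem_of_map {A : Type*} [MeasurableSpace A] {Γ : Measure A}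
    {u : A → Rd d} (hu : Measurable u) {μ : Measure (Rd d)} {Ω : Set (Rd d)}
    (hΩ : MeasurableSet Ω) (h : Γ.map u = μ) (hμ : μ Ωᶜ = 0) :
    ∀ᵐ a ∂Γ, u a ∈ Ω := by
  rw [ae_iff]
  have : Γ.map u Ωᶜ = 0 := by rw [h]; exact hμ
  rwa [Measure.map_apply hu hΩ.compl] at this

lemma lint_lt_top {A : Type*} [MeasurableSpace A] {Γ : Measure A} [IsFiniteMeasure Γ]
    {u v : A → Rd d} {Ω : Set (Rd d)} {R : ℝ}
    (hR : ∀ x ∈ Ω, ‖x‖ ≤ R) (hau : ∀ᵐ a ∂Γ, u a ∈ Ω) (hav : ∀ᵐ a ∂Γ, v a ∈ Ω) :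
    (∫⁻ a, ENNReal.ofReal (‖u a - v a‖ ^ 2) ∂Γ) < ⊤ := by
  have hb : ∀ᵐ a ∂Γ, ENNReal.ofReal (‖u a - v a‖ ^ 2) ≤ ENNReal.ofReal ((2*R)^2) := by
    filter_upwards [hau, hav] with a h1 h2
    apply ENNReal.ofReal_le_ofReal
    have n1 : ‖u a‖ ≤ R := hR _ h1
    have n2 : ‖v a‖ ≤ R := hR _ h2
    have n3 : ‖u a - v a‖ ≤ ‖u a‖ + ‖v a‖ := norm_sub_le _ _
    nlinarith [norm_nonneg (u a - v a), norm_nonneg (u a), norm_nonneg (v a)]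
  calc (∫⁻ a, ENNReal.ofReal (‖u a - v a‖ ^ 2) ∂Γ)
      ≤ ∫⁻ _, ENNReal.ofReal ((2*R)^2) ∂Γ := lintegral_mono_ae hb
    _ = ENNReal.ofReal ((2*R)^2) * Γ univ := lintegral_const _
    _ < ⊤ := ENNReal.mul_lt_top ENNReal.ofReal_lt_top (measure_lt_top Γ univ)

lemma W2sqE_lt_top {μ ν : Measure (Rd d)} [IsProbabilityMeasure μ] [IsProbabilityMeasure ν]
    {Ω : Set (Rd d)} (hΩ : MeasurableSet Ω) {R : ℝ} (hR : ∀ x ∈ Ω, ‖x‖ ≤ R)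
    (hμ : μ Ωᶜ = 0) (hν : ν Ωᶜ = 0) : W2sqE μ ν < ⊤ := by
  have hc := isCoupling_prod μ ν
  refine lt_of_le_of_lt (W2sqE_le_cost hc) ?_
  rw [transportCost]
  exact lint_lt_top hR (ae_mem_of_map measurable_fst hΩ hc.1 hμ)
    (ae_mem_of_map measurable_snd hΩ hc.2 hν)

lemma exists_coupling_le {μ ν : Measure (Rd d)} (hfin : W2sqE μ ν ≠ ⊤)
    {ε : ℝ≥0∞} (hε : ε ≠ 0) :
    ∃ γ, IsCoupling γ μ ν ∧ transportCost γ ≤ W2sqE μ ν + ε := by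
  have h : W2sqE μ ν < W2sqE μ ν + ε := ENNReal.lt_add_right hfin hε
  conv_lhs at h => rw [W2sqE]
  rw [iInf_lt_iff] at h
  obtain ⟨γ, hγ⟩ := h
  rw [iInf_lt_iff] at hγ
  obtain ⟨hc, hlt⟩ := hγ
  exact ⟨γ, hc, hlt.le⟩

lemma W2sqE_comm (μ ν : Measure (Rd d)) : W2sqE μ ν = W2sqE ν μ := by
  have key : ∀ μ' ν' : Measure (Rd d), W2sqE μ' ν' ≤ W2sqE ν' μ' := by
    intro μ' ν'
    refine le_iInf₂ fun γ hγ => ?_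
    have hc : IsCoupling (γ.map Prod.swap) μ' ν' := by
      constructor
      · rw [Measure.map_map measurable_fst measurable_swap]; exact hγ.2
      · rw [Measure.map_map measurable_snd measurable_swap]; exact hγ.1
    refine le_trans (W2sqE_le_cost hc) ?_
    rw [transportCost, lintegral_map measurable_cost measurable_swap, transportCost]
    apply le_of_eq
    apply lintegral_congr
    intro p
    rw [Prod.snd_swap, Prod.fst_swap, norm_sub_rev]
  exact le_antisymm (key μ ν) (key ν μ)

lemma W2sq_comm (μ ν : Measure (Rd d)) : W2sq μ ν = W2sq ν μ := by
  rw [W2sq, W2sq, W2sqE_comm]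

lemma W2sq_nonneg (μ ν : Measure (Rd d)) : 0 ≤ W2sq μ ν := ENNReal.toReal_nonneg

lemma combo_identity (t : ℝ) (a b z : Rd d) :
    ‖z - ((1-t) • a + t • b)‖ ^ 2 + (t*(1-t)) * ‖a - b‖ ^ 2
      = (1-t) * ‖z - a‖ ^ 2 + t * ‖z - b‖ ^ 2 := by
  have h1 : z - ((1-t) • a + t • b) = (1-t) • (z - a) + t • (z - b) := by module
  have h2 : a - b = (z - b) - (z - a) := by abel
  rw [h1, h2]
  rw [@norm_add_sq_real, @norm_sub_sq_real, norm_smul, norm_smul,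
    real_inner_smul_left, real_inner_smul_right]
  simp only [mul_pow, sq_abs, Real.norm_eq_abs]
  rw [real_inner_comm (z-b) (z-a)]
  ring

lemma lint_combo {A : Type*} [MeasurableSpace A] (Γ : Measure A)
    {u v w : A → Rd d} (hu : Measurable u) (hv : Measurable v) (hw : Measurable w)
    {t : ℝ} (ht0 : 0 ≤ t) (ht1 : t ≤ 1) :
    (∫⁻ a, ENNReal.ofReal (‖w a - ((1-t) • u a + t • v a)‖ ^ 2) ∂Γ)
        + ENNReal.ofReal (t*(1-t)) * ∫⁻ a, ENNReal.ofReal (‖u a - v a‖ ^ 2) ∂Γ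
      = ENNReal.ofReal (1-t) * ∫⁻ a, ENNReal.ofReal (‖w a - u a‖ ^ 2) ∂Γ
        + ENNReal.ofReal t * ∫⁻ a, ENNReal.ofReal (‖w a - v a‖ ^ 2) ∂Γ := by
  have ht' : (0:ℝ) ≤ t * (1 - t) := mul_nonneg ht0 (by linarith)
  have m0 : Measurable fun a => ENNReal.ofReal (‖w a - ((1-t) • u a + t • v a)‖ ^ 2) :=
    ((hw.sub ((hu.const_smul (1-t)).add (hv.const_smul t))).norm.pow_const 2).ennreal_ofReal
  have m1 : Measurable fun a => ENNReal.ofReal (‖u a - v a‖ ^ 2) :=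
    ((hu.sub hv).norm.pow_const 2).ennreal_ofReal
  have m2 : Measurable fun a => ENNReal.ofReal (‖w a - u a‖ ^ 2) :=
    ((hw.sub hu).norm.pow_const 2).ennreal_ofReal
  have m3 : Measurable fun a => ENNReal.ofReal (‖w a - v a‖ ^ 2) :=
    ((hw.sub hv).norm.pow_const 2).ennreal_ofReal
  rw [← lintegral_const_mul _ m1, ← lintegral_const_mul _ m2, ← lintegral_const_mul _ m3,
    ← lintegral_add_left m0, ← lintegral_add_left (m2.const_mul _)]
  apply lintegral_congr
  intro a
  have h2 : (0:ℝ) ≤ t*(1-t) * ‖u a - v a‖ ^ 2 := mul_nonneg ht' (by positivity)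
  have h3 : (0:ℝ) ≤ (1-t) * ‖w a - u a‖ ^ 2 := mul_nonneg (by linarith) (by positivity)
  have h4 : (0:ℝ) ≤ t * ‖w a - v a‖ ^ 2 := mul_nonneg ht0 (by positivity)
  rw [← ENNReal.ofReal_mul ht', ← ENNReal.ofReal_add (by positivity) h2, combo_identity,
    ENNReal.ofReal_add h3 h4, ENNReal.ofReal_mul (by linarith : (0:ℝ) ≤ 1 - t),
    ENNReal.ofReal_mul ht0]

lemma map_compProd_comap {A : Type*} [MeasurableSpace A] (m : Measure A)
    [IsProbabilityMeasure m]
    {B C : Type*} [MeasurableSpace B] [MeasurableSpace C]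
    (η : ProbabilityTheory.Kernel B C) [ProbabilityTheory.IsMarkovKernel η]
    {e : A → B} (he : Measurable e) :
    (m ⊗ₘ (η.comap e he)).map (fun q => (e q.1, q.2)) = (m.map e) ⊗ₘ η := by
  have hmap : Measurable fun q : A × C => (e q.1, q.2) :=
    (he.comp measurable_fst).prodMk measurable_snd
  haveI : IsProbabilityMeasure (m.map e) := Measure.isProbabilityMeasure_map he.aemeasurable
  haveI : IsProbabilityMeasure ((m ⊗ₘ (η.comap e he)).map fun q : A × C => (e q.1, q.2)) :=
    Measure.isProbabilityMeasure_map hmap.aemeasurable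
  refine ext_of_generate_finite _ generateFrom_prod.symm isPiSystem_prod ?_ ?_
  · rintro S ⟨s1, hs1, s2, hs2, rfl⟩
    simp only [mem_setOf_eq] at hs1 hs2
    rw [Measure.map_apply hmap (hs1.prod hs2)]
    have hpre : (fun q : A × C => (e q.1, q.2)) ⁻¹' (s1 ×ˢ s2) = (e ⁻¹' s1) ×ˢ s2 := rfl
    rw [hpre, Measure.compProd_apply_prod (he hs1) hs2,
      Measure.compProd_apply_prod hs1 hs2,
      MeasureTheory.setLIntegral_map hs1 (η.measurable_coe hs2) he]
    apply lintegral_congr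
    intro a
    rw [ProbabilityTheory.Kernel.comap_apply]
  · simp [measure_univ]

lemma glue {A : Type*} [MeasurableSpace A] (m : Measure A) [IsProbabilityMeasure m]
    (η : Measure (Rd d × Rd d)) [IsProbabilityMeasure η] {e : A → Rd d} (he : Measurable e)
    (h : m.map e = η.map Prod.fst) :
    ∃ Γ : Measure (A × Rd d), IsProbabilityMeasure Γ ∧ Γ.map Prod.fst = m ∧
      Γ.map (fun q => (e q.1, q.2)) = η := by
  refine ⟨m ⊗ₘ (η.condKernel.comap e he), inferInstance, ?_, ?_⟩
  · show (m ⊗ₘ (η.condKernel.comap e he)).fst = m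
    exact Measure.fst_compProd m _
  · rw [map_compProd_comap m η.condKernel he, h]
    show η.fst ⊗ₘ η.condKernel = η
    exact η.disintegrate _

lemma isOptimal_dirac {z : Rd d} {μ : Measure (Rd d)} {γ : Measure (Rd d × Rd d)}
    (hγ : IsCoupling γ (Measure.dirac z) μ) : IsOptimalPlan γ (Measure.dirac z) μ := by
  have hzc : MeasurableSet ({z}ᶜ : Set (Rd d)) := (measurableSet_singleton z).compl
  have cost_eq : ∀ γ' : Measure (Rd d × Rd d), IsCoupling γ' (Measure.dirac z) μ →
      transportCost γ' = ∫⁻ y, ENNReal.ofReal (‖z - y‖ ^ 2) ∂μ := by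
    intro γ' hγ'
    have hae : ∀ᵐ p ∂γ', p.1 = z := by
      rw [ae_iff]
      have h0 : γ'.map Prod.fst {z}ᶜ = 0 := by
        rw [hγ'.1, Measure.dirac_apply' _ hzc]
        simp
      rw [Measure.map_apply measurable_fst hzc] at h0
      exact h0
    have hmz : Measurable fun y : Rd d => ENNReal.ofReal (‖z - y‖ ^ 2) :=
      ((measurable_const.sub measurable_id).norm.pow_const 2).ennreal_ofReal
    rw [transportCost, ← hγ'.2, lintegral_map hmz measurable_snd]
    apply lintegral_congr_ae
    filter_upwards [hae] with p hp
    rw [hp]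
  refine ⟨hγ, ?_⟩
  rw [cost_eq γ hγ]
  refine le_antisymm ?_ ?_
  · exact le_iInf₂ fun γ' h' => (cost_eq γ' h').symm.le
  · exact le_trans (W2sqE_le_cost hγ) (cost_eq γ hγ).le

lemma lintegral_triangle {A : Type*} [MeasurableSpace A] (Γ : Measure A)
    {u v w : A → Rd d} (hu : Measurable u) (hv : Measurable v) (hw : Measurable w) :
    ∫⁻ a, ENNReal.ofReal (‖u a - w a‖ ^ 2) ∂Γ
      ≤ ((∫⁻ a, ENNReal.ofReal (‖u a - v a‖ ^ 2) ∂Γ) ^ (1/2 : ℝ)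
          + (∫⁻ a, ENNReal.ofReal (‖v a - w a‖ ^ 2) ∂Γ) ^ (1/2 : ℝ)) ^ (2 : ℝ) := by
  have hfm : AEMeasurable (fun a => ENNReal.ofReal ‖u a - v a‖) Γ :=
    ((hu.sub hv).norm.ennreal_ofReal).aemeasurable
  have hgm : AEMeasurable (fun a => ENNReal.ofReal ‖v a - w a‖) Γ :=
    ((hv.sub hw).norm.ennreal_ofReal).aemeasurable
  have hsq : ∀ x : Rd d, ENNReal.ofReal (‖x‖ ^ 2) = ENNReal.ofReal ‖x‖ ^ (2:ℝ) := by
    intro x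
    rw [ENNReal.ofReal_pow (norm_nonneg _), ← ENNReal.rpow_natCast]
    norm_num
  have hpt : ∀ a, ENNReal.ofReal (‖u a - w a‖ ^ 2)
      ≤ (ENNReal.ofReal ‖u a - v a‖ + ENNReal.ofReal ‖v a - w a‖) ^ (2:ℝ) := by
    intro a
    rw [hsq]
    refine ENNReal.rpow_le_rpow ?_ (by norm_num)
    rw [← ENNReal.ofReal_add (norm_nonneg _) (norm_nonneg _)]
    apply ENNReal.ofReal_le_ofReal
    calc ‖u a - w a‖ = ‖(u a - v a) + (v a - w a)‖ := by rw [sub_add_sub_cancel]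
      _ ≤ ‖u a - v a‖ + ‖v a - w a‖ := norm_add_le _ _
  calc ∫⁻ a, ENNReal.ofReal (‖u a - w a‖ ^ 2) ∂Γ
      ≤ ∫⁻ a, (ENNReal.ofReal ‖u a - v a‖ + ENNReal.ofReal ‖v a - w a‖) ^ (2:ℝ) ∂Γ :=
        lintegral_mono hpt
    _ = ((∫⁻ a, (ENNReal.ofReal ‖u a - v a‖ + ENNReal.ofReal ‖v a - w a‖) ^ (2:ℝ) ∂Γ)
          ^ (1/2 : ℝ)) ^ (2:ℝ) := by
        rw [← ENNReal.rpow_mul]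
        norm_num
    _ ≤ ((∫⁻ a, ENNReal.ofReal ‖u a - v a‖ ^ (2:ℝ) ∂Γ) ^ (1/2 : ℝ)
          + (∫⁻ a, ENNReal.ofReal ‖v a - w a‖ ^ (2:ℝ) ∂Γ) ^ (1/2 : ℝ)) ^ (2:ℝ) := by
        refine ENNReal.rpow_le_rpow ?_ (by norm_num)
        exact ENNReal.lintegral_Lp_add_le hfm hgm one_le_two
    _ = ((∫⁻ a, ENNReal.ofReal (‖u a - v a‖ ^ 2) ∂Γ) ^ (1/2 : ℝ)
          + (∫⁻ a, ENNReal.ofReal (‖v a - w a‖ ^ 2) ∂Γ) ^ (1/2 : ℝ)) ^ (2 : ℝ) := by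
        congr 2 <;> · apply congrArg (· ^ (1/2:ℝ)); apply lintegral_congr; intro a
                      rw [hsq]

lemma nonneg_of_forall_Ioo {K C : ℝ} (h : ∀ t : ℝ, t ∈ Ioo (0:ℝ) 1 → 0 ≤ K + t * C) :
    0 ≤ K := by
  have htend : Filter.Tendsto (fun t : ℝ => K + t * C) (nhdsWithin 0 (Ioi 0)) (nhds K) := by
    have : Filter.Tendsto (fun t : ℝ => K + t * C) (nhds 0) (nhds (K + 0 * C)) := by
      exact ((continuous_const.add ((continuous_id).mul continuous_const)).tendsto 0)
    simpa using this.mono_left nhdsWithin_le_nhds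
  refine ge_of_tendsto htend ?_
  filter_upwards [Ioo_mem_nhdsGT_of_mem (by constructor <;> norm_num : (0:ℝ) ∈ Ico (0:ℝ) 1)]
    with t ht using h t ht


lemma probOn_interp {Ω : Set (Rd d)} (hΩm : MeasurableSet Ω) (hΩconv : Convex ℝ Ω)
    {μ₀ μ₁ : Measure (Rd d)} {m : Measure (Rd d × Rd d)}
    (h0 : ProbOn Ω μ₀) (h1 : ProbOn Ω μ₁) (hm : IsCoupling m μ₀ μ₁)
    {t : ℝ} (ht0 : 0 ≤ t) (ht1 : t ≤ 1) :
    ProbOn Ω (m.map fun q => (1-t) • q.1 + t • q.2) := by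
  haveI := h0.1
  haveI : IsProbabilityMeasure m := coupling_isProbabilityMeasure hm
  constructor
  · exact Measure.isProbabilityMeasure_map (measurable_interp t).aemeasurable
  · rw [Measure.map_apply (measurable_interp t) hΩm.compl]
    have hae : ∀ᵐ q ∂m, (1-t) • q.1 + t • q.2 ∈ Ω := by
      filter_upwards [ae_mem_of_map measurable_fst hΩm hm.1 h0.2,
        ae_mem_of_map measurable_snd hΩm hm.2 h1.2] with q hq1 hq2
      exact hΩconv hq1 hq2 (by linarith) ht0 (by ring)
    exact ae_iff.mp hae

lemma W2sq_le_cost_toReal {μ₀ μ₁ : Measure (Rd d)} {m : Measure (Rd d × Rd d)}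
    (hm : IsCoupling m μ₀ μ₁) (hfin : transportCost m ≠ ⊤) :
    W2sq μ₀ μ₁ ≤ (transportCost m).toReal :=
  ENNReal.toReal_mono hfin (W2sqE_le_cost hm)

lemma integral_cost (m : Measure (Rd d × Rd d)) :
    ∫ q, ‖q.1 - q.2‖ ^ 2 ∂m = (transportCost m).toReal := by
  rw [transportCost]
  exact integral_eq_lintegral_of_nonneg_ae (ae_of_all _ fun q => by positivity)
    ((continuous_fst.sub continuous_snd).norm.pow 2).aestronglyMeasurable

lemma convex_bound {Ω : Set (Rd d)} (hΩm : MeasurableSet Ω) {R : ℝ}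
    (hR : ∀ x ∈ Ω, ‖x‖ ≤ R)
    {σ μ₀ μ₁ : Measure (Rd d)} (hσ : ProbOn Ω σ) (h0 : ProbOn Ω μ₀) (h1 : ProbOn Ω μ₁)
    {t ε : ℝ} (ht0 : 0 ≤ t) (ht1 : t ≤ 1) (hε : 0 < ε) :
    ∃ m : Measure (Rd d × Rd d), IsCoupling m μ₀ μ₁ ∧ transportCost m ≠ ⊤ ∧
      W2sq (m.map fun q => (1-t) • q.1 + t • q.2) σ
        ≤ (1-t) * W2sq μ₀ σ + t * W2sq μ₁ σ + ε - t*(1-t) * (transportCost m).toReal := by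
  haveI := hσ.1; haveI := h0.1; haveI := h1.1
  have hfin0 : W2sqE σ μ₀ ≠ ⊤ := (W2sqE_lt_top hΩm hR hσ.2 h0.2).ne
  have hfin1 : W2sqE σ μ₁ ≠ ⊤ := (W2sqE_lt_top hΩm hR hσ.2 h1.2).ne
  have hεne : ENNReal.ofReal ε ≠ 0 := (ENNReal.ofReal_pos.mpr hε).ne'
  obtain ⟨P, hP, hPc⟩ := exists_coupling_le hfin0 hεne
  obtain ⟨Q, hQ, hQc⟩ := exists_coupling_le hfin1 hεne
  haveI : IsProbabilityMeasure P := coupling_isProbabilityMeasure hP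
  haveI : IsProbabilityMeasure Q := coupling_isProbabilityMeasure hQ
  obtain ⟨Γ, hΓprob, hΓ1, hΓ2⟩ := glue P Q measurable_fst (hP.1.trans hQ.1.symm)
  haveI := hΓprob
  have hu : Measurable fun q : (Rd d × Rd d) × Rd d => q.1.2 :=
    measurable_snd.comp measurable_fst
  have hv : Measurable fun q : (Rd d × Rd d) × Rd d => q.2 := measurable_snd
  have hw : Measurable fun q : (Rd d × Rd d) × Rd d => q.1.1 :=
    measurable_fst.comp measurable_fst
  have hmu : Γ.map (fun q : (Rd d × Rd d) × Rd d => q.1.2) = μ₀ := by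
    rw [show (fun q : (Rd d × Rd d) × Rd d => q.1.2) = Prod.snd ∘ Prod.fst from rfl,
      ← Measure.map_map measurable_snd measurable_fst, hΓ1, hP.2]
  have hmv : Γ.map (fun q : (Rd d × Rd d) × Rd d => q.2) = μ₁ := by
    rw [show (fun q : (Rd d × Rd d) × Rd d => q.2)
        = Prod.snd ∘ (fun q : (Rd d × Rd d) × Rd d => (q.1.1, q.2)) from rfl,
      ← Measure.map_map measurable_snd (hw.prodMk hv), hΓ2, hQ.2]
  have hmw : Γ.map (fun q : (Rd d × Rd d) × Rd d => q.1.1) = σ := by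
    rw [show (fun q : (Rd d × Rd d) × Rd d => q.1.1) = Prod.fst ∘ Prod.fst from rfl,
      ← Measure.map_map measurable_fst measurable_fst, hΓ1, hP.1]
  refine ⟨Γ.map (fun q => (q.1.2, q.2)), ?_, ?_, ?_⟩
  · have := isCoupling_map_pair Γ hu hv
    rwa [hmu, hmv] at this
  · rw [transportCost_map_pair Γ hu hv]
    exact (lint_lt_top hR (ae_mem_of_map hu hΩm hmu h0.2)
      (ae_mem_of_map hv hΩm hmv h1.2)).ne
  · -- main estimate
    have hJm : transportCost (Γ.map (fun q => (q.1.2, q.2)))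
        = ∫⁻ q, ENNReal.ofReal (‖q.1.2 - q.2‖^2) ∂Γ := transportCost_map_pair Γ hu hv
    have hJP : transportCost P = ∫⁻ q, ENNReal.ofReal (‖q.1.1 - q.1.2‖^2) ∂Γ := by
      rw [← hΓ1, transportCost, lintegral_map measurable_cost measurable_fst]
    have hJQ : transportCost Q = ∫⁻ q, ENNReal.ofReal (‖q.1.1 - q.2‖^2) ∂Γ := by
      rw [← hΓ2, transportCost, lintegral_map measurable_cost (hw.prodMk hv)]
    have hJmfin : (∫⁻ q, ENNReal.ofReal (‖q.1.2 - q.2‖^2) ∂Γ) ≠ ⊤ :=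
      (lint_lt_top hR (ae_mem_of_map hu hΩm hmu h0.2) (ae_mem_of_map hv hΩm hmv h1.2)).ne
    have hPfin : transportCost P ≠ ⊤ :=
      (lt_of_le_of_lt hPc (ENNReal.add_lt_top.mpr ⟨hfin0.lt_top, ENNReal.ofReal_lt_top⟩)).ne
    have hQfin : transportCost Q ≠ ⊤ :=
      (lt_of_le_of_lt hQc (ENNReal.add_lt_top.mpr ⟨hfin1.lt_top, ENNReal.ofReal_lt_top⟩)).ne
    have hcombo := lint_combo Γ hu hv hw ht0 ht1
    have hPlf : (∫⁻ q, ENNReal.ofReal (‖q.1.1 - q.1.2‖^2) ∂Γ) ≠ ⊤ := hJP ▸ hPfin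
    have hQlf : (∫⁻ q, ENNReal.ofReal (‖q.1.1 - q.2‖^2) ∂Γ) ≠ ⊤ := hJQ ▸ hQfin
    have hme : Measurable (fun q : (Rd d × Rd d) × Rd d => (1-t) • q.1.2 + t • q.2) :=
      by fun_prop
    have homega : ((Γ.map (fun q => (q.1.2, q.2))).map fun q => (1-t) • q.1 + t • q.2)
        = Γ.map (fun q => (1-t) • q.1.2 + t • q.2) := by
      rw [Measure.map_map (measurable_interp t) (hu.prodMk hv)]
      rfl
    have hWle : W2sqE ((Γ.map (fun q => (q.1.2, q.2))).map fun q => (1-t) • q.1 + t • q.2) σ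
        ≤ ∫⁻ q, ENNReal.ofReal (‖q.1.1 - ((1-t) • q.1.2 + t • q.2)‖^2) ∂Γ := by
      have hc := isCoupling_map_pair Γ hme hw
      rw [hmw] at hc
      rw [homega]
      refine le_trans (W2sqE_le_cost hc) ?_
      rw [transportCost_map_pair Γ hme hw]
      exact le_of_eq (lintegral_congr fun q => by rw [norm_sub_rev])
    have hAfin : (∫⁻ q, ENNReal.ofReal (‖q.1.1 - ((1-t) • q.1.2 + t • q.2)‖^2) ∂Γ) ≠ ⊤ := by
      refine ne_top_of_le_ne_top ?_ (le_self_add.trans hcombo.le)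
      exact ENNReal.add_ne_top.mpr ⟨ENNReal.mul_ne_top ENNReal.ofReal_ne_top hPlf,
        ENNReal.mul_ne_top ENNReal.ofReal_ne_top hQlf⟩
    -- pass to reals
    have hreal := congrArg ENNReal.toReal hcombo
    rw [ENNReal.toReal_add hAfin (ENNReal.mul_ne_top ENNReal.ofReal_ne_top hJmfin),
      ENNReal.toReal_add (ENNReal.mul_ne_top ENNReal.ofReal_ne_top hPlf)
        (ENNReal.mul_ne_top ENNReal.ofReal_ne_top hQlf),
      ENNReal.toReal_mul, ENNReal.toReal_mul, ENNReal.toReal_mul,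
      ENNReal.toReal_ofReal (mul_nonneg ht0 (by linarith)),
      ENNReal.toReal_ofReal (by linarith : (0:ℝ) ≤ 1 - t),
      ENNReal.toReal_ofReal ht0, ← hJP, ← hJQ, ← hJm] at hreal
    have hW1 : W2sq ((Γ.map (fun q => (q.1.2, q.2))).map fun q => (1-t) • q.1 + t • q.2) σ
        ≤ (∫⁻ q, ENNReal.ofReal (‖q.1.1 - ((1-t) • q.1.2 + t • q.2)‖^2) ∂Γ).toReal :=
      ENNReal.toReal_mono hAfin hWle
    have hP2 : (transportCost P).toReal ≤ W2sq σ μ₀ + ε := by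
      have := ENNReal.toReal_mono
        (ENNReal.add_ne_top.mpr ⟨hfin0, ENNReal.ofReal_ne_top⟩) hPc
      rwa [ENNReal.toReal_add hfin0 ENNReal.ofReal_ne_top,
        ENNReal.toReal_ofReal hε.le] at this
    have hQ2 : (transportCost Q).toReal ≤ W2sq σ μ₁ + ε := by
      have := ENNReal.toReal_mono
        (ENNReal.add_ne_top.mpr ⟨hfin1, ENNReal.ofReal_ne_top⟩) hQc
      rwa [ENNReal.toReal_add hfin1 ENNReal.ofReal_ne_top,
        ENNReal.toReal_ofReal hε.le] at this
    have hc0 : W2sq σ μ₀ = W2sq μ₀ σ := W2sq_comm _ _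
    have hc1 : W2sq σ μ₁ = W2sq μ₁ σ := W2sq_comm _ _
    have e1 : (1-t) * (transportCost P).toReal ≤ (1-t) * (W2sq μ₀ σ + ε) := by
      rw [← hc0]; exact mul_le_mul_of_nonneg_left hP2 (by linarith)
    have e2 : t * (transportCost Q).toReal ≤ t * (W2sq μ₁ σ + ε) := by
      rw [← hc1]; exact mul_le_mul_of_nonneg_left hQ2 ht0
    nlinarith [hreal, hW1, e1, e2]

lemma semiconcave {Ω : Set (Rd d)} (hΩm : MeasurableSet Ω) (hΩconv : Convex ℝ Ω) {R : ℝ}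
    (hR : ∀ x ∈ Ω, ‖x‖ ≤ R)
    {μ₀ μ₁ σ' : Measure (Rd d)} (h0 : ProbOn Ω μ₀) (h1 : ProbOn Ω μ₁) (hσ : ProbOn Ω σ')
    {m : Measure (Rd d × Rd d)} (hm : IsCoupling m μ₀ μ₁)
    {t ε : ℝ} (ht0 : 0 ≤ t) (ht1 : t ≤ 1) (hε : 0 < ε) :
    (1-t) * W2sq μ₀ σ' + t * W2sq μ₁ σ' - t*(1-t) * (transportCost m).toReal
      ≤ W2sq (m.map fun q => (1-t) • q.1 + t • q.2) σ' + ε := by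
  haveI := hσ.1; haveI := h0.1; haveI := h1.1
  haveI : IsProbabilityMeasure m := coupling_isProbabilityMeasure hm
  have homegaP : ProbOn Ω (m.map fun q => (1-t) • q.1 + t • q.2) :=
    probOn_interp hΩm hΩconv h0 h1 hm ht0 ht1
  haveI := homegaP.1
  have hfinω : W2sqE (m.map fun q => (1-t) • q.1 + t • q.2) σ' ≠ ⊤ :=
    (W2sqE_lt_top hΩm hR homegaP.2 hσ.2).ne
  have hεne : ENNReal.ofReal ε ≠ 0 := (ENNReal.ofReal_pos.mpr hε).ne'
  obtain ⟨η, hη, hηc⟩ := exists_coupling_le hfinω hεne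
  haveI : IsProbabilityMeasure η := coupling_isProbabilityMeasure hη
  obtain ⟨Γ, hΓprob, hΓ1, hΓ2⟩ := glue m η (measurable_interp t) hη.1.symm
  haveI := hΓprob
  have hu : Measurable fun q : (Rd d × Rd d) × Rd d => q.1.1 :=
    measurable_fst.comp measurable_fst
  have hv : Measurable fun q : (Rd d × Rd d) × Rd d => q.1.2 :=
    measurable_snd.comp measurable_fst
  have hw : Measurable fun q : (Rd d × Rd d) × Rd d => q.2 := measurable_snd
  have hme : Measurable (fun q : (Rd d × Rd d) × Rd d => (1-t) • q.1.1 + t • q.1.2) :=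
    by fun_prop
  have hmu : Γ.map (fun q : (Rd d × Rd d) × Rd d => q.1.1) = μ₀ := by
    rw [show (fun q : (Rd d × Rd d) × Rd d => q.1.1) = Prod.fst ∘ Prod.fst from rfl,
      ← Measure.map_map measurable_fst measurable_fst, hΓ1, hm.1]
  have hmv : Γ.map (fun q : (Rd d × Rd d) × Rd d => q.1.2) = μ₁ := by
    rw [show (fun q : (Rd d × Rd d) × Rd d => q.1.2) = Prod.snd ∘ Prod.fst from rfl,
      ← Measure.map_map measurable_snd measurable_fst, hΓ1, hm.2]
  have hmw : Γ.map (fun q : (Rd d × Rd d) × Rd d => q.2) = σ' := by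
    rw [show (fun q : (Rd d × Rd d) × Rd d => q.2)
        = Prod.snd ∘ (fun q : (Rd d × Rd d) × Rd d =>
            ((1-t) • q.1.1 + t • q.1.2, q.2)) from rfl,
      ← Measure.map_map measurable_snd (hme.prodMk hw), hΓ2, hη.2]
  have hJm : transportCost m = ∫⁻ q, ENNReal.ofReal (‖q.1.1 - q.1.2‖^2) ∂Γ := by
    rw [← hΓ1, transportCost, lintegral_map measurable_cost measurable_fst]
  have hJη : transportCost η
      = ∫⁻ q, ENNReal.ofReal (‖q.2 - ((1-t) • q.1.1 + t • q.1.2)‖^2) ∂Γ := by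
    rw [← hΓ2, transportCost, lintegral_map measurable_cost (hme.prodMk hw)]
    exact lintegral_congr fun q => by rw [norm_sub_rev]
  have hJmfin : transportCost m ≠ ⊤ := by
    rw [hJm]
    exact (lint_lt_top hR (ae_mem_of_map hu hΩm hmu h0.2)
      (ae_mem_of_map hv hΩm hmv h1.2)).ne
  have hJufin : (∫⁻ q, ENNReal.ofReal (‖q.2 - q.1.1‖^2) ∂Γ) ≠ ⊤ :=
    (lint_lt_top hR (ae_mem_of_map hw hΩm hmw hσ.2)
      (ae_mem_of_map hu hΩm hmu h0.2)).ne
  have hJvfin : (∫⁻ q, ENNReal.ofReal (‖q.2 - q.1.2‖^2) ∂Γ) ≠ ⊤ :=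
    (lint_lt_top hR (ae_mem_of_map hw hΩm hmw hσ.2)
      (ae_mem_of_map hv hΩm hmv h1.2)).ne
  have hηfin : transportCost η ≠ ⊤ :=
    (lt_of_le_of_lt hηc (ENNReal.add_lt_top.mpr ⟨hfinω.lt_top, ENNReal.ofReal_lt_top⟩)).ne
  have hcombo := lint_combo Γ hu hv hw ht0 ht1
  have hmlf : (∫⁻ q, ENNReal.ofReal (‖q.1.1 - q.1.2‖^2) ∂Γ) ≠ ⊤ := hJm ▸ hJmfin
  have hηlf : (∫⁻ q, ENNReal.ofReal (‖q.2 - ((1-t) • q.1.1 + t • q.1.2)‖^2) ∂Γ) ≠ ⊤ :=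
    hJη ▸ hηfin
  -- lower bounds on the two cross integrals
  have hW0 : W2sq μ₀ σ' ≤ (∫⁻ q, ENNReal.ofReal (‖q.2 - q.1.1‖^2) ∂Γ).toReal := by
    have hc := isCoupling_map_pair Γ hu hw
    rw [hmu, hmw] at hc
    refine ENNReal.toReal_mono hJufin (le_trans (W2sqE_le_cost hc) ?_)
    rw [transportCost_map_pair Γ hu hw]
    exact le_of_eq (lintegral_congr fun q => by rw [norm_sub_rev])
  have hW1 : W2sq μ₁ σ' ≤ (∫⁻ q, ENNReal.ofReal (‖q.2 - q.1.2‖^2) ∂Γ).toReal := by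
    have hc := isCoupling_map_pair Γ hv hw
    rw [hmv, hmw] at hc
    refine ENNReal.toReal_mono hJvfin (le_trans (W2sqE_le_cost hc) ?_)
    rw [transportCost_map_pair Γ hv hw]
    exact le_of_eq (lintegral_congr fun q => by rw [norm_sub_rev])
  have hreal := congrArg ENNReal.toReal hcombo
  rw [ENNReal.toReal_add hηlf (ENNReal.mul_ne_top ENNReal.ofReal_ne_top hmlf),
    ENNReal.toReal_add (ENNReal.mul_ne_top ENNReal.ofReal_ne_top hJufin)
      (ENNReal.mul_ne_top ENNReal.ofReal_ne_top hJvfin),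
    ENNReal.toReal_mul, ENNReal.toReal_mul, ENNReal.toReal_mul,
    ENNReal.toReal_ofReal (mul_nonneg ht0 (by linarith)),
    ENNReal.toReal_ofReal (by linarith : (0:ℝ) ≤ 1 - t),
    ENNReal.toReal_ofReal ht0, ← hJη, ← hJm] at hreal
  have hη2 : (transportCost η).toReal
      ≤ W2sq (m.map fun q => (1-t) • q.1 + t • q.2) σ' + ε := by
    have := ENNReal.toReal_mono
      (ENNReal.add_ne_top.mpr ⟨hfinω, ENNReal.ofReal_ne_top⟩) hηc
    rwa [ENNReal.toReal_add hfinω ENNReal.ofReal_ne_top,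
      ENNReal.toReal_ofReal hε.le] at this
  have e1 : (1-t) * W2sq μ₀ σ'
      ≤ (1-t) * (∫⁻ q, ENNReal.ofReal (‖q.2 - q.1.1‖^2) ∂Γ).toReal :=
    mul_le_mul_of_nonneg_left hW0 (by linarith)
  have e2 : t * W2sq μ₁ σ'
      ≤ t * (∫⁻ q, ENNReal.ofReal (‖q.2 - q.1.2‖^2) ∂Γ).toReal :=
    mul_le_mul_of_nonneg_left hW1 ht0
  nlinarith [hreal, hη2, e1, e2]


lemma Econv {Ω : Set (Rd d)} (hΩm : MeasurableSet Ω) {𝓔 : Measure (Rd d) → ℝ} {lam : ℝ}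
    (hgg : LambdaConvexGG Ω 𝓔 lam) {z : Rd d} (hz : z ∈ Ω)
    {μ₀ μ₁ : Measure (Rd d)} (h0 : ProbOn Ω μ₀) (h1 : ProbOn Ω μ₁)
    {m : Measure (Rd d × Rd d)} (hm : IsCoupling m μ₀ μ₁)
    {t : ℝ} (ht0 : 0 ≤ t) (ht1 : t ≤ 1) :
    𝓔 (m.map fun q => (1 - t) • q.1 + t • q.2)
      ≤ (1 - t) * 𝓔 μ₀ + t * 𝓔 μ₁ - lam * t * (1 - t) / 2 * (transportCost m).toReal := by
  haveI := h0.1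
  haveI : IsProbabilityMeasure m := coupling_isProbabilityMeasure hm
  have hdir : ProbOn Ω (Measure.dirac z) := by
    refine ⟨inferInstance, ?_⟩
    rw [Measure.dirac_apply' _ hΩm.compl]
    simp [hz]
  have hmz : Measurable fun q : Rd d × Rd d => ((z, q) : Rd d × Rd d × Rd d) :=
    measurable_const.prodMk measurable_id
  have hconst : m.map (fun _ : Rd d × Rd d => z) = Measure.dirac z := by
    rw [Measure.map_const, measure_univ, one_smul]
  have hg1 : Measurable fun p : Rd d × Rd d × Rd d => (p.1, p.2.1) :=
    measurable_fst.prodMk (measurable_fst.comp measurable_snd)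
  have hg2 : Measurable fun p : Rd d × Rd d × Rd d => (p.1, p.2.2) :=
    measurable_fst.prodMk (measurable_snd.comp measurable_snd)
  have h01 : (m.map fun q => ((z, q) : Rd d × Rd d × Rd d)).map (fun p => (p.1, p.2.1))
      = m.map (fun q => (z, q.1)) := by
    rw [Measure.map_map hg1 hmz]
    rfl
  have h02 : (m.map fun q => ((z, q) : Rd d × Rd d × Rd d)).map (fun p => (p.1, p.2.2))
      = m.map (fun q => (z, q.2)) := by
    rw [Measure.map_map hg2 hmz]
    rfl
  have hopt1 : IsOptimalPlan ((m.map fun q => ((z, q) : Rd d × Rd d × Rd d)).map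
      (fun p => (p.1, p.2.1))) (Measure.dirac z) μ₀ := by
    rw [h01]
    apply isOptimal_dirac
    have := isCoupling_map_pair (u := fun _ : Rd d × Rd d => z) (v := Prod.fst) m
      measurable_const measurable_fst
    rwa [hconst, hm.1] at this
  have hopt2 : IsOptimalPlan ((m.map fun q => ((z, q) : Rd d × Rd d × Rd d)).map
      (fun p => (p.1, p.2.2))) (Measure.dirac z) μ₁ := by
    rw [h02]
    apply isOptimal_dirac
    have := isCoupling_map_pair (u := fun _ : Rd d × Rd d => z) (v := Prod.snd) m
      measurable_const measurable_snd
    rwa [hconst, hm.2] at this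
  have hcurve : (m.map fun q => ((z, q) : Rd d × Rd d × Rd d)).map
      (fun p => (1 - t) • p.2.1 + t • p.2.2) = m.map (fun q => (1 - t) • q.1 + t • q.2) := by
    have hgc : Measurable fun p : Rd d × Rd d × Rd d => (1 - t) • p.2.1 + t • p.2.2 :=
      by fun_prop
    rw [Measure.map_map hgc hmz]
    rfl
  have hint : (∫ p, ‖p.2.1 - p.2.2‖ ^ 2 ∂(m.map fun q => ((z, q) : Rd d × Rd d × Rd d)))
      = (transportCost m).toReal := by
    have hfm : Measurable fun p : Rd d × Rd d × Rd d => ‖p.2.1 - p.2.2‖ ^ 2 :=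
      ((measurable_fst.comp measurable_snd).sub
        (measurable_snd.comp measurable_snd)).norm.pow_const 2
    rw [integral_map hmz.aemeasurable hfm.aestronglyMeasurable]
    exact integral_cost m
  have := hgg (Measure.dirac z) μ₀ μ₁ hdir h0 h1
    (m.map fun q => ((z, q) : Rd d × Rd d × Rd d)) hopt1 hopt2 t ⟨ht0, ht1⟩
  rwa [hcurve, hint] at this

end Aux

set_option maxHeartbeats 2000000 in
/-- Lemma 5.1: discrete EVI inequality for one step of the EVBDF2
scheme with metric extrapolation. -/
theorem stmt_16 {d : ℕ} (Ω : Set (Rd d)) (hΩc : IsCompact Ω) (hΩconv : Convex ℝ Ω)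
    (𝓔 : Measure (Rd d) → ℝ)
    (hlsc : LowerSemicontinuous fun p : ProbabilityMeasure (Rd d) => 𝓔 (p : Measure (Rd d)))
    (lam : ℝ) (hlam : 0 ≤ lam) (hgg : LambdaConvexGG Ω 𝓔 lam)
    (α β τ : ℝ) (hα : 1 < α) (hβ : β = α - 1) (hβ1 : β < 1) (hτ : 0 < τ)
    (ρm2 ρm1 ρa ρn : Measure (Rd d))
    (hm2 : ProbOn Ω ρm2) (hm1 : ProbOn Ω ρm1) (haP : ProbOn Ω ρa) (hnP : ProbOn Ω ρn)
    (hext : ∀ ρ, ProbOn Ω ρ →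
      α * W2sq ρa ρm1 - β * W2sq ρa ρm2 ≤ α * W2sq ρ ρm1 - β * W2sq ρ ρm2)
    (hmin : ∀ ρ, ProbOn Ω ρ →
      W2sq ρn ρa / (2*(1-β)*τ) + 𝓔 ρn ≤ W2sq ρ ρa / (2*(1-β)*τ) + 𝓔 ρ)
    (ν : Measure (Rd d)) (hν : ProbOn Ω ν) :
    (1/(2*(1-β)*τ) + lam/2) * W2sq ρn ν
        - α * W2sq ν ρm1 / (2*(1-β)*τ) + β * W2sq ν ρm2 / (2*(1-β)*τ)
      ≤ 𝓔 ν - 𝓔 ρn + α*β * W2sq ρm1 ρm2 / (2*(1-β)*τ)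
        - W2sq ρn ρa / (2*(1-β)*τ) := by
  subst hβ
  have hΩm : MeasurableSet Ω := hΩc.isClosed.measurableSet
  obtain ⟨R, hR⟩ : ∃ R : ℝ, ∀ x ∈ Ω, ‖x‖ ≤ R :=
    isBounded_iff_forall_norm_le.mp hΩc.isBounded
  have hΩne : Ω.Nonempty := by
    by_contra h
    rw [not_nonempty_iff_eq_empty] at h
    have h2 := hm1.2
    rw [h, compl_empty] at h2
    exact one_ne_zero (hm1.1.measure_univ.symm.trans h2)
  obtain ⟨z, hz⟩ := hΩne
  have hfinW : ∀ μ' ν' : Measure (Rd d), ProbOn Ω μ' → ProbOn Ω ν' → W2sqE μ' ν' ≠ ⊤ := by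
    intro μ' ν' h1 h2
    haveI := h1.1; haveI := h2.1
    exact (W2sqE_lt_top hΩm hR h1.2 h2.2).ne
  set s := 2*(1-(α-1))*τ with hsdef
  have hs : 0 < s := by
    rw [hsdef]
    exact mul_pos (mul_pos (by norm_num) (by linarith)) hτ
  set c := 1/s with hcdef
  have hc : 0 < c := by rw [hcdef]; exact one_div_pos.mpr hs
  have hdiv : ∀ a : ℝ, a / s = c * a := by
    intro a
    rw [hcdef, one_div, inv_mul_eq_div]
  have hminc : ∀ ρ, ProbOn Ω ρ → c * W2sq ρn ρa + 𝓔 ρn ≤ c * W2sq ρ ρa + 𝓔 ρ := by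
    intro ρ hρ
    have := hmin ρ hρ
    rw [hdiv, hdiv] at this
    linarith
  -- Step 1 : discrete EVI along approximate generalized geodesics based at ρa
  have hEVI : (c + lam/2) * W2sq ρn ν ≤ 𝓔 ν - 𝓔 ρn + c * W2sq ν ρa - c * W2sq ρn ρa := by
    have hkey : ∀ t : ℝ, t ∈ Ioo (0:ℝ) 1 →
        0 ≤ (c * W2sq ν ρa + 𝓔 ν - c * W2sq ρn ρa - 𝓔 ρn - (c + lam/2) * W2sq ρn ν)
            + t * (c + (c + lam/2) * W2sq ρn ν) := by
      rintro t ⟨ht0, ht1⟩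
      obtain ⟨m, hmc, hmfin, hmb⟩ := convex_bound hΩm hR haP hnP hν ht0.le ht1.le
        (mul_pos ht0 ht0 : (0:ℝ) < t*t)
      set Lm := (transportCost m).toReal with hLm
      have hωP : ProbOn Ω (m.map fun q => (1-t) • q.1 + t • q.2) :=
        probOn_interp hΩm hΩconv hnP hν hmc ht0.le ht1.le
      have h1 := hminc _ hωP
      have h3 := Econv hΩm hgg hz hnP hν hmc ht0.le ht1.le
      have h4 : W2sq ρn ν ≤ Lm := W2sq_le_cost_toReal hmc hmfin
      have h5 : (0:ℝ) ≤ Lm := ENNReal.toReal_nonneg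
      have hmul : c * W2sq ((m.map fun q => (1-t) • q.1 + t • q.2)) ρa
          ≤ c * ((1-t) * W2sq ρn ρa + t * W2sq ν ρa + t*t - t*(1-t)*Lm) :=
        mul_le_mul_of_nonneg_left hmb hc.le
      have h6 : c * W2sq ρn ρa + 𝓔 ρn
          ≤ c*((1-t)*W2sq ρn ρa + t*W2sq ν ρa + t*t - t*(1-t)*Lm)
            + ((1-t)*𝓔 ρn + t*𝓔 ν - lam*t*(1-t)/2*Lm) := by linarith
      have h7 : t * (c * W2sq ρn ρa + 𝓔 ρn + (1-t)*(c+lam/2)*Lm)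
          ≤ t * (c * W2sq ν ρa + 𝓔 ν + t*c) := by linarith [h6]
      have h8 := le_of_mul_le_mul_left h7 ht0
      have h9 : (1-t)*(c+lam/2)*W2sq ρn ν ≤ (1-t)*(c+lam/2)*Lm :=
        mul_le_mul_of_nonneg_left h4 (mul_nonneg (by linarith) (by linarith))
      nlinarith [h8, h9]
    have := nonneg_of_forall_Ioo hkey
    linarith
  -- Step 2 : optimality property of the metric extrapolation
  have hA : α * W2sq ρa ρm1 - (α-1) * W2sq ρa ρm2 + W2sq ν ρa
      ≤ α * W2sq ν ρm1 - (α-1) * W2sq ν ρm2 := by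
    have hkey : ∀ t : ℝ, t ∈ Ioo (0:ℝ) 1 →
        0 ≤ (α * W2sq ν ρm1 - (α-1) * W2sq ν ρm2
              - (α * W2sq ρa ρm1 - (α-1) * W2sq ρa ρm2) - W2sq ν ρa)
            + t * ((α + (α-1)) + W2sq ν ρa) := by
      rintro t ⟨ht0, ht1⟩
      obtain ⟨m, hmc, hmfin, hmb⟩ := convex_bound hΩm hR hm1 haP hν ht0.le ht1.le
        (mul_pos ht0 ht0 : (0:ℝ) < t*t)
      set Lm := (transportCost m).toReal with hLm
      have hωP : ProbOn Ω (m.map fun q => (1-t) • q.1 + t • q.2) :=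
        probOn_interp hΩm hΩconv haP hν hmc ht0.le ht1.le
      have hsc := semiconcave hΩm hΩconv hR haP hν hm2 hmc ht0.le ht1.le
        (mul_pos ht0 ht0 : (0:ℝ) < t*t)
      have hxt := hext _ hωP
      have h4 : W2sq ν ρa ≤ Lm := by
        rw [W2sq_comm]
        exact W2sq_le_cost_toReal hmc hmfin
      have h5 : (0:ℝ) ≤ Lm := ENNReal.toReal_nonneg
      have e1 : α * W2sq (m.map fun q => (1-t) • q.1 + t • q.2) ρm1
          ≤ α * ((1-t)*W2sq ρa ρm1 + t*W2sq ν ρm1 + t*t - t*(1-t)*Lm) :=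
        mul_le_mul_of_nonneg_left hmb (by linarith)
      have e2 : (α-1) * ((1-t)*W2sq ρa ρm2 + t*W2sq ν ρm2 - t*(1-t)*Lm)
          ≤ (α-1) * (W2sq (m.map fun q => (1-t) • q.1 + t • q.2) ρm2 + t*t) :=
        mul_le_mul_of_nonneg_left hsc (by linarith)
      have h7 : t * ((α*W2sq ρa ρm1 - (α-1)*W2sq ρa ρm2) + (1-t)*Lm)
          ≤ t * ((α*W2sq ν ρm1 - (α-1)*W2sq ν ρm2) + (α + (α-1))*t) := by
        linarith [hxt, e1, e2]
      have h8 := le_of_mul_le_mul_left h7 ht0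
      have h9 : (1-t)*W2sq ν ρa ≤ (1-t)*Lm := mul_le_mul_of_nonneg_left h4 (by linarith)
      nlinarith [h8, h9]
    have := nonneg_of_forall_Ioo hkey
    linarith
  -- Step 3 : lower bound on the extrapolation functional (triangle inequality)
  have hB : (α-1) * W2sq ρa ρm2 - α * W2sq ρa ρm1 ≤ α*(α-1) * W2sq ρm1 ρm2 := by
    have hεstep : ∀ ε : ℝ, 0 < ε →
        (α-1) * W2sq ρa ρm2 - α * W2sq ρa ρm1 ≤ α*(α-1) * W2sq ρm1 ρm2 + α^2 * ε := by
      intro ε hε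
      have hεne : ENNReal.ofReal ε ≠ 0 := (ENNReal.ofReal_pos.mpr hε).ne'
      have hf1 : W2sqE ρm1 ρa ≠ ⊤ := hfinW _ _ hm1 haP
      have hf2 : W2sqE ρm1 ρm2 ≠ ⊤ := hfinW _ _ hm1 hm2
      obtain ⟨P, hP, hPc⟩ := exists_coupling_le hf1 hεne
      obtain ⟨Q, hQ, hQc⟩ := exists_coupling_le hf2 hεne
      haveI := hm1.1; haveI := haP.1; haveI := hm2.1
      haveI : IsProbabilityMeasure P := coupling_isProbabilityMeasure hP
      haveI : IsProbabilityMeasure Q := coupling_isProbabilityMeasure hQ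
      obtain ⟨Γ, hΓprob, hΓ1, hΓ2⟩ := glue P Q measurable_fst (hP.1.trans hQ.1.symm)
      haveI := hΓprob
      have hu : Measurable fun q : (Rd d × Rd d) × Rd d => q.1.2 :=
        measurable_snd.comp measurable_fst
      have hv : Measurable fun q : (Rd d × Rd d) × Rd d => q.1.1 :=
        measurable_fst.comp measurable_fst
      have hw : Measurable fun q : (Rd d × Rd d) × Rd d => q.2 := measurable_snd
      have hma : Γ.map (fun q : (Rd d × Rd d) × Rd d => q.1.2) = ρa := by
        rw [show (fun q : (Rd d × Rd d) × Rd d => q.1.2) = Prod.snd ∘ Prod.fst from rfl,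
          ← Measure.map_map measurable_snd measurable_fst, hΓ1, hP.2]
      have hmm2 : Γ.map (fun q : (Rd d × Rd d) × Rd d => q.2) = ρm2 := by
        rw [show (fun q : (Rd d × Rd d) × Rd d => q.2)
            = Prod.snd ∘ (fun q : (Rd d × Rd d) × Rd d => (q.1.1, q.2)) from rfl,
          ← Measure.map_map measurable_snd (hv.prodMk hw), hΓ2, hQ.2]
      have htri := lintegral_triangle Γ hu hv hw
      have hcW : W2sqE ρa ρm2 ≤ ∫⁻ q, ENNReal.ofReal (‖q.1.2 - q.2‖^2) ∂Γ := by
        have hcop := isCoupling_map_pair Γ hu hw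
        rw [hma, hmm2] at hcop
        exact le_of_le_of_eq (W2sqE_le_cost hcop) (transportCost_map_pair Γ hu hw)
      have hJPl : (∫⁻ q, ENNReal.ofReal (‖q.1.2 - q.1.1‖^2) ∂Γ) = transportCost P := by
        rw [← hΓ1, transportCost, lintegral_map measurable_cost measurable_fst]
        exact lintegral_congr fun q => by rw [norm_sub_rev]
      have hJQl : (∫⁻ q, ENNReal.ofReal (‖q.1.1 - q.2‖^2) ∂Γ) = transportCost Q := by
        rw [← hΓ2, transportCost, lintegral_map measurable_cost (hv.prodMk hw)]
      have hm1' : (∫⁻ q, ENNReal.ofReal (‖q.1.2 - q.1.1‖^2) ∂Γ)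
          ≤ W2sqE ρm1 ρa + ENNReal.ofReal ε := hJPl ▸ hPc
      have hm2' : (∫⁻ q, ENNReal.ofReal (‖q.1.1 - q.2‖^2) ∂Γ)
          ≤ W2sqE ρm1 ρm2 + ENNReal.ofReal ε := hJQl ▸ hQc
      have hxfin : W2sqE ρm1 ρa + ENNReal.ofReal ε ≠ ⊤ :=
        ENNReal.add_ne_top.mpr ⟨hf1, ENNReal.ofReal_ne_top⟩
      have hyfin : W2sqE ρm1 ρm2 + ENNReal.ofReal ε ≠ ⊤ :=
        ENNReal.add_ne_top.mpr ⟨hf2, ENNReal.ofReal_ne_top⟩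
      have hbig : W2sqE ρa ρm2
          ≤ ((W2sqE ρm1 ρa + ENNReal.ofReal ε) ^ (1/2:ℝ)
              + (W2sqE ρm1 ρm2 + ENNReal.ofReal ε) ^ (1/2:ℝ)) ^ (2:ℝ) := by
        refine le_trans hcW (le_trans htri ?_)
        refine ENNReal.rpow_le_rpow ?_ (by norm_num)
        exact add_le_add (ENNReal.rpow_le_rpow hm1' (by norm_num))
          (ENNReal.rpow_le_rpow hm2' (by norm_num))
      -- pass to the reals
      set A : ℝ := (W2sq ρm1 ρa + ε) ^ (1/2:ℝ) with hA2def
      set B : ℝ := (W2sq ρm1 ρm2 + ε) ^ (1/2:ℝ) with hB2def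
      have hAtr : ((W2sqE ρm1 ρa + ENNReal.ofReal ε) ^ (1/2:ℝ)).toReal = A := by
        rw [← ENNReal.toReal_rpow, ENNReal.toReal_add hf1 ENNReal.ofReal_ne_top,
          ENNReal.toReal_ofReal hε.le, hA2def]
        rfl
      have hBtr : ((W2sqE ρm1 ρm2 + ENNReal.ofReal ε) ^ (1/2:ℝ)).toReal = B := by
        rw [← ENNReal.toReal_rpow, ENNReal.toReal_add hf2 ENNReal.ofReal_ne_top,
          ENNReal.toReal_ofReal hε.le, hB2def]
        rfl
      have hrhsfin : ((W2sqE ρm1 ρa + ENNReal.ofReal ε) ^ (1/2:ℝ)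
          + (W2sqE ρm1 ρm2 + ENNReal.ofReal ε) ^ (1/2:ℝ)) ^ (2:ℝ) ≠ ⊤ :=
        ENNReal.rpow_ne_top_of_nonneg (by norm_num)
          (ENNReal.add_ne_top.mpr ⟨ENNReal.rpow_ne_top_of_nonneg (by norm_num) hxfin,
            ENNReal.rpow_ne_top_of_nonneg (by norm_num) hyfin⟩)
      have hreal : W2sq ρa ρm2 ≤ (A + B) ^ (2:ℝ) := by
        have := ENNReal.toReal_mono hrhsfin hbig
        rwa [← ENNReal.toReal_rpow,
          ENNReal.toReal_add (ENNReal.rpow_ne_top_of_nonneg (by norm_num) hxfin)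
            (ENNReal.rpow_ne_top_of_nonneg (by norm_num) hyfin),
          hAtr, hBtr] at this
      have hWn1 : (0:ℝ) ≤ W2sq ρm1 ρa + ε := by
        have := W2sq_nonneg ρm1 ρa; linarith
      have hWn2 : (0:ℝ) ≤ W2sq ρm1 ρm2 + ε := by
        have := W2sq_nonneg ρm1 ρm2; linarith
      have hApos : 0 ≤ A := Real.rpow_nonneg hWn1 _
      have hBpos : 0 ≤ B := Real.rpow_nonneg hWn2 _
      have hA2 : A^2 = W2sq ρm1 ρa + ε := by
        rw [hA2def, ← Real.rpow_natCast ((W2sq ρm1 ρa + ε) ^ (1/2:ℝ)) 2,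
          ← Real.rpow_mul hWn1]
        norm_num
      have hB2 : B^2 = W2sq ρm1 ρm2 + ε := by
        rw [hB2def, ← Real.rpow_natCast ((W2sq ρm1 ρm2 + ε) ^ (1/2:ℝ)) 2,
          ← Real.rpow_mul hWn2]
        norm_num
      have hrsq : (A+B) ^ (2:ℝ) = (A+B)^2 := by
        rw [← Real.rpow_natCast (A+B) 2]
        norm_num
      rw [hrsq] at hreal
      have hcomm : W2sq ρm1 ρa = W2sq ρa ρm1 := W2sq_comm _ _
      nlinarith [hreal, hA2, hB2, hApos, hBpos, sq_nonneg (A - (α-1)*B), hε,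
        mul_le_mul_of_nonneg_left hreal (by linarith : (0:ℝ) ≤ α - 1)]
    refine le_of_forall_pos_le_add ?_
    intro ε hε
    have hα2 : (0:ℝ) < α^2 := by positivity
    have := hεstep (ε / α^2) (by positivity)
    calc (α-1) * W2sq ρa ρm2 - α * W2sq ρa ρm1
        ≤ α*(α-1) * W2sq ρm1 ρm2 + α^2 * (ε / α^2) := this
      _ = α*(α-1) * W2sq ρm1 ρm2 + ε := by field_simp
  -- Final assembly
  rw [hdiv, hdiv, hdiv, hdiv] -- rewrite the four divisions in the goal
  have hAB : W2sq ν ρa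
      ≤ α * W2sq ν ρm1 - (α-1) * W2sq ν ρm2 + α*(α-1) * W2sq ρm1 ρm2 := by
    linarith [hA, hB]
  have hABc : c * W2sq ν ρa
      ≤ c * (α * W2sq ν ρm1 - (α-1) * W2sq ν ρm2 + α*(α-1) * W2sq ρm1 ρm2) :=
    mul_le_mul_of_nonneg_left hAB hc.le
  nlinarith [hEVI, hABc]
end
end
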